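/- arXiv:2603.16824 — 5 statements merged into one kernel-verified Lean document; each statement's English description precedes it below -/
import Mathlib

section
/- Let d ≥ 1 be an integer, δ > 1, β > 0, γ ∈ (0,1), and u ∈ (0,1). Then ∫_u^1 (u/s)^γ ( ∫_{ℝ^d} ρ_δ(β^{-1} u^γ s^{1−γ} |x|^d) dx ) ds = (β ω_d δ/(δ−1)) · log(1/u). -/
open MeasureTheory

/-- The long-range connection profile `ρ_δ(z) = min(1, z^{-δ})`. -/
noncomputable def rho (δ z : ℝ) : ℝ := min 1 (z ^ (-δ))

/-- The Lebesgue volume of the `d`-dimensional Euclidean unit ball. -/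
noncomputable def unitBallVol (d : ℕ) : ℝ :=
  (volume (Metric.ball (0 : EuclideanSpace ℝ (Fin d)) 1)).toReal

open Set in
lemma oneD (d : ℕ) (hd : 1 ≤ d) {δ c : ℝ} (hδ : 1 < δ) (hc : 0 < c) :
    ∫ y in Ioi (0:ℝ), y ^ (d - 1) * rho δ (c * y ^ (d:ℝ))
      = c⁻¹ * δ / ((d:ℝ) * (δ - 1)) := by
  have hd0 : (0:ℝ) < d := by exact_mod_cast hd
  set R : ℝ := c ^ (-(d:ℝ)⁻¹) with hRdef
  have hR : 0 < R := Real.rpow_pos_of_pos hc _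
  have hRd : R ^ (d:ℝ) = c⁻¹ := by
    rw [hRdef, ← Real.rpow_mul hc.le, neg_mul, inv_mul_cancel₀ hd0.ne', Real.rpow_neg_one]
  have key1 : ∀ y ∈ Ioc (0:ℝ) R, y ^ (d-1) * rho δ (c * y ^ (d:ℝ)) = y ^ (d-1) := by
    intro y hy
    have hy0 : 0 < y := hy.1
    have hz0 : 0 < c * y ^ (d:ℝ) := mul_pos hc (Real.rpow_pos_of_pos hy0 _)
    have hz1 : c * y ^ (d:ℝ) ≤ 1 := by
      have : y ^ (d:ℝ) ≤ c⁻¹ := by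
        rw [← hRd]; exact Real.rpow_le_rpow hy0.le hy.2 hd0.le
      calc c * y ^ (d:ℝ) ≤ c * c⁻¹ := by nlinarith
        _ = 1 := mul_inv_cancel₀ hc.ne'
    have : rho δ (c * y ^ (d:ℝ)) = 1 := by
      unfold rho
      exact min_eq_left (Real.one_le_rpow_of_pos_of_le_one_of_nonpos hz0 hz1 (by linarith))
    rw [this, mul_one]
  have key2 : ∀ y ∈ Ioi R, y ^ (d-1) * rho δ (c * y ^ (d:ℝ))
      = c ^ (-δ) * y ^ (((d-1:ℕ):ℝ) + (d:ℝ) * (-δ)) := by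
    intro y hy
    have hy0 : 0 < y := hR.trans hy
    have hz1 : 1 ≤ c * y ^ (d:ℝ) := by
      have : c⁻¹ ≤ y ^ (d:ℝ) := by
        rw [← hRd]; exact Real.rpow_le_rpow hR.le (le_of_lt hy) hd0.le
      calc (1:ℝ) = c * c⁻¹ := (mul_inv_cancel₀ hc.ne').symm
        _ ≤ c * y ^ (d:ℝ) := by nlinarith
    have h1 : rho δ (c * y ^ (d:ℝ)) = (c * y ^ (d:ℝ)) ^ (-δ) := by
      unfold rho
      exact min_eq_right (Real.rpow_le_one_of_one_le_of_nonpos hz1 (by linarith))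
    rw [h1, Real.mul_rpow hc.le (Real.rpow_pos_of_pos hy0 _).le,
      ← Real.rpow_natCast y (d-1), ← Real.rpow_mul hy0.le, Real.rpow_add hy0]
    ring
  have ha : ((d-1:ℕ):ℝ) + (d:ℝ) * (-δ) < -1 := by
    have : ((d-1:ℕ):ℝ) = (d:ℝ) - 1 := by
      rw [Nat.cast_sub hd]; norm_num
    rw [this]; nlinarith
  have hsplit : Ioc (0:ℝ) R ∪ Ioi R = Ioi 0 := Ioc_union_Ioi_eq_Ioi hR.le
  have hint1 : IntegrableOn (fun y : ℝ => y ^ (d-1) * rho δ (c * y ^ (d:ℝ))) (Ioc 0 R) := by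
    refine (IntegrableOn.congr_fun ?_ (fun y hy => (key1 y hy).symm) measurableSet_Ioc)
    exact (intervalIntegral.intervalIntegrable_pow (d-1) (a := 0) (b := R) (μ := volume)).1
  have hint2 : IntegrableOn (fun y : ℝ => y ^ (d-1) * rho δ (c * y ^ (d:ℝ))) (Ioi R) := by
    refine (IntegrableOn.congr_fun ?_ (fun y hy => (key2 y hy).symm) measurableSet_Ioi)
    exact (integrableOn_Ioi_rpow_of_lt ha hR).const_mul _
  rw [← hsplit, setIntegral_union (Ioc_disjoint_Ioi le_rfl) measurableSet_Ioi hint1 hint2]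
  have e1 : ∫ y in Ioc (0:ℝ) R, y ^ (d-1) * rho δ (c * y ^ (d:ℝ)) = c⁻¹ / d := by
    rw [setIntegral_congr_fun measurableSet_Ioc key1,
      ← intervalIntegral.integral_of_le hR.le, integral_pow, Nat.sub_add_cancel hd,
      ← Real.rpow_natCast R d, hRd, zero_pow (by omega : d ≠ 0), Nat.cast_sub hd]
    norm_num
  have e2 : ∫ y in Ioi R, y ^ (d-1) * rho δ (c * y ^ (d:ℝ))
      = c⁻¹ / ((d:ℝ) * (δ - 1)) := by
    rw [setIntegral_congr_fun measurableSet_Ioi key2, integral_const_mul,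
      integral_Ioi_rpow_of_lt ha hR]
    have hcd : ((d-1:ℕ):ℝ) = (d:ℝ) - 1 := by
      rw [Nat.cast_sub hd]; norm_num
    have hRe : R ^ (((d-1:ℕ):ℝ) + (d:ℝ) * (-δ) + 1) = c ^ (δ - 1) := by
      rw [hRdef, ← Real.rpow_mul hc.le, hcd]
      congr 1
      field_simp
      ring
    have h2 : c ^ (-δ) * c ^ (δ - 1) = c⁻¹ := by
      rw [← Real.rpow_add hc, show -δ + (δ - 1) = -1 by ring, Real.rpow_neg_one]
    rw [hRe, hcd, show (d:ℝ) - 1 + (d:ℝ) * -δ + 1 = -((d:ℝ) * (δ - 1)) by ring,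
      neg_div_neg_eq, ← mul_div_assoc, h2]
  rw [e1, e2]
  have hδ1 : δ - 1 ≠ 0 := by linarith
  field_simp
  ring

lemma innerInt (d : ℕ) (hd : 1 ≤ d) {δ c : ℝ} (hδ : 1 < δ) (hc : 0 < c) :
    ∫ x : EuclideanSpace ℝ (Fin d), rho δ (c * ‖x‖ ^ (d:ℝ))
      = unitBallVol d * c⁻¹ * δ / (δ - 1) := by
  haveI : Nonempty (Fin d) := Fin.pos_iff_nonempty.mp hd
  haveI : Nontrivial (EuclideanSpace ℝ (Fin d)) := inferInstance
  have hdim : Module.finrank ℝ (EuclideanSpace ℝ (Fin d)) = d := finrank_euclideanSpace_fin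
  rw [MeasureTheory.integral_fun_norm_addHaar (volume : Measure (EuclideanSpace ℝ (Fin d)))
    (fun r => rho δ (c * r ^ (d:ℝ))), hdim]
  simp only [nsmul_eq_mul, smul_eq_mul]
  rw [oneD d hd hδ hc]
  unfold unitBallVol
  simp only [Measure.real]
  have hd0 : (0:ℝ) < d := by exact_mod_cast hd
  have h1 : (d:ℝ) ≠ 0 := hd0.ne'
  have h2 : δ - 1 ≠ 0 := sub_ne_zero.mpr hδ.ne'
  have h3 : c ≠ 0 := hc.ne'
  field_simp

/-- Expected number of reciprocal out-neighbours of a vertex with birth time `u`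
in the directed age-dependent random connection model, boundary case `Γ = γ`. -/
theorem stmt3 (d : ℕ) (hd : 1 ≤ d) (δ β γ u : ℝ) (hδ : 1 < δ) (hβ : 0 < β)
    (hγ0 : 0 < γ) (hγ1 : γ < 1) (hu0 : 0 < u) (hu1 : u < 1) :
    ∫ s in u..1, (u / s) ^ γ *
        ∫ x : EuclideanSpace ℝ (Fin d),
          rho δ (β⁻¹ * u ^ γ * s ^ (1 - γ) * ‖x‖ ^ (d : ℝ))
      = (β * unitBallVol d * δ / (δ - 1)) * Real.log (1 / u) := by
  have hcongr : ∀ s ∈ Set.uIcc u 1,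
      (u / s) ^ γ * ∫ x : EuclideanSpace ℝ (Fin d),
          rho δ (β⁻¹ * u ^ γ * s ^ (1 - γ) * ‖x‖ ^ (d : ℝ))
        = (β * unitBallVol d * δ / (δ - 1)) * (1 / s) := by
    intro s hs
    rw [Set.uIcc_of_le hu1.le] at hs
    have hs0 : 0 < s := lt_of_lt_of_le hu0 hs.1
    have hc : 0 < β⁻¹ * u ^ γ * s ^ (1 - γ) :=
      mul_pos (mul_pos (inv_pos.mpr hβ) (Real.rpow_pos_of_pos hu0 _))
        (Real.rpow_pos_of_pos hs0 _)
    rw [innerInt d hd hδ hc]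
    rw [Real.div_rpow hu0.le hs0.le]
    rw [mul_inv, mul_inv, inv_inv]
    rw [← Real.rpow_neg hu0.le, ← Real.rpow_neg hs0.le]
    have h1 : u ^ γ / s ^ γ * (unitBallVol d * (β * u ^ (-γ) * s ^ (-(1-γ))) * δ / (δ - 1))
        = (β * unitBallVol d * δ / (δ - 1)) *
          ((u ^ γ * u ^ (-γ)) * (s ^ γ)⁻¹ * s ^ (-(1-γ))) := by ring
    rw [h1]
    congr 1
    rw [← Real.rpow_add hu0, show γ + -γ = 0 by ring, Real.rpow_zero, one_mul,
      ← Real.rpow_neg hs0.le, ← Real.rpow_add hs0, show -γ + -(1-γ) = -1 by ring,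
      Real.rpow_neg_one, one_div]
  rw [intervalIntegral.integral_congr hcongr, intervalIntegral.integral_const_mul,
    integral_one_div (by
      rw [Set.uIcc_of_le hu1.le]
      intro h
      exact absurd h.1 (not_le.mpr hu0))]
end

section
/- Let c > 0 and a ∈ (0,1). Then there exist constants 0 < c₁ ≤ c₂ < ∞ and K ∈ ℕ such that for all natural numbers k ≥ K: c₁ · k^{−1−1/a} ≤ ∫_0^1 e^{−c u^{−a}} (c u^{−a})^k / k! du ≤ c₂ · k^{−1−1/a}. -/
open MeasureTheory Real Set Filter Topology

/-- `(n+j)! ≤ (n+j)^j * n!` -/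
lemma stmt7_fact_le : ∀ (j n : ℕ), (n + j).factorial ≤ (n + j) ^ j * n.factorial
  | 0, n => by simp
  | j + 1, n => by
    have h := stmt7_fact_le j n
    calc (n + (j+1)).factorial = (n + j + 1) * (n + j).factorial := by
          rw [show n + (j+1) = (n+j)+1 by ring, Nat.factorial_succ]
      _ ≤ (n + (j+1)) * ((n + j) ^ j * n.factorial) := by
          exact Nat.mul_le_mul (by omega) h
      _ ≤ (n + (j+1)) * ((n + (j+1)) ^ j * n.factorial) :=
          Nat.mul_le_mul_left _ (Nat.mul_le_mul_right _ (Nat.pow_le_pow_left (by omega) j))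
      _ = (n + (j+1)) ^ (j+1) * n.factorial := by ring

lemma stmt7_gautschi_upper {x s : ℝ} (hx : 1 ≤ x) (hs0 : 0 ≤ s) (hs1 : s ≤ 1) :
    Real.Gamma (x + s) ≤ Real.Gamma x * x ^ s := by
  have hx0 : (0:ℝ) < x := lt_of_lt_of_le one_pos hx
  have hΓx : 0 < Real.Gamma x := Real.Gamma_pos_of_pos hx0
  have hxs : (0:ℝ) < x + s := by linarith
  have hc := Real.convexOn_log_Gamma.2 (mem_Ioi.mpr hx0)
      (mem_Ioi.mpr (by linarith : (0:ℝ) < x + 1))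
      (by linarith : (0:ℝ) ≤ 1 - s) hs0 (by ring)
  have hcomb : (1 - s) • x + s • (x + 1) = x + s := by simp [smul_eq_mul]; ring
  rw [hcomb] at hc
  have hΓ1 : Real.Gamma (x + 1) = x * Real.Gamma x := Real.Gamma_add_one hx0.ne'
  simp only [Function.comp_apply, smul_eq_mul, hΓ1] at hc
  rw [Real.log_mul hx0.ne' hΓx.ne'] at hc
  have : Real.log (Real.Gamma (x + s)) ≤ Real.log (Real.Gamma x) + s * Real.log x := by
    nlinarith
  calc Real.Gamma (x + s) = Real.exp (Real.log (Real.Gamma (x + s))) :=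
        (Real.exp_log (Real.Gamma_pos_of_pos hxs)).symm
    _ ≤ Real.exp (Real.log (Real.Gamma x) + s * Real.log x) := Real.exp_le_exp.mpr this
    _ = Real.Gamma x * x ^ s := by
        rw [Real.exp_add, Real.exp_log hΓx, Real.rpow_def_of_pos hx0, mul_comm s]

lemma stmt7_gautschi_lower {x s : ℝ} (hx : 1 ≤ x) (hs0 : 0 ≤ s) (hs1 : s ≤ 1) :
    Real.Gamma x * x * (x + s) ^ (s - 1) ≤ Real.Gamma (x + s) := by
  have hx0 : (0:ℝ) < x := lt_of_lt_of_le one_pos hx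
  have hΓx : 0 < Real.Gamma x := Real.Gamma_pos_of_pos hx0
  have hxs : (0:ℝ) < x + s := by linarith
  have hΓxs : 0 < Real.Gamma (x + s) := Real.Gamma_pos_of_pos hxs
  have hc := Real.convexOn_log_Gamma.2 (mem_Ioi.mpr hxs)
      (mem_Ioi.mpr (by linarith : (0:ℝ) < x + s + 1)) hs0
      (by linarith : (0:ℝ) ≤ 1 - s) (by ring)
  have hcomb : s • (x + s) + (1 - s) • (x + s + 1) = x + 1 := by simp [smul_eq_mul]; ring
  rw [hcomb] at hc
  have hΓ1 : Real.Gamma (x + 1) = x * Real.Gamma x := Real.Gamma_add_one hx0.ne'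
  have hΓs1 : Real.Gamma (x + s + 1) = (x + s) * Real.Gamma (x + s) :=
    Real.Gamma_add_one hxs.ne'
  simp only [Function.comp_apply, smul_eq_mul, hΓ1, hΓs1] at hc
  rw [Real.log_mul hx0.ne' hΓx.ne', Real.log_mul hxs.ne' hΓxs.ne'] at hc
  have hlog : Real.log x + Real.log (Real.Gamma x) ≤
      Real.log (Real.Gamma (x + s)) + (1 - s) * Real.log (x + s) := by nlinarith
  have key : Real.Gamma x * x ≤ Real.Gamma (x + s) * (x + s) ^ (1 - s) := by
    calc Real.Gamma x * x = Real.exp (Real.log x + Real.log (Real.Gamma x)) := by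
          rw [Real.exp_add, Real.exp_log hx0, Real.exp_log hΓx]; ring
      _ ≤ Real.exp (Real.log (Real.Gamma (x + s)) + (1 - s) * Real.log (x + s)) :=
          Real.exp_le_exp.mpr hlog
      _ = Real.Gamma (x + s) * (x + s) ^ (1 - s) := by
          rw [Real.exp_add, Real.exp_log hΓxs, Real.rpow_def_of_pos hxs, mul_comm (1-s)]
  have hp : (0:ℝ) < (x + s) ^ (1 - s) := Real.rpow_pos_of_pos hxs _
  have h2 : (x + s) ^ (s - 1) = ((x + s) ^ (1 - s))⁻¹ := by
    rw [← Real.rpow_neg hxs.le]; ring_nf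
  rw [h2, ← div_eq_mul_inv, div_le_iff₀ hp]
  linarith

lemma stmt7_gamma_ratio (b : ℝ) (hb : 1 < b) :
    ∃ (C : ℝ) (M : ℕ), 1/2 ≤ C ∧ ∀ k : ℕ, M ≤ k → (b + 1 ≤ (k:ℝ)) ∧
      (1/2) * ((k:ℝ) ^ (-1 - b) * k.factorial) ≤ Real.Gamma ((k:ℝ) - b) ∧
      Real.Gamma ((k:ℝ) - b) ≤ C * ((k:ℝ) ^ (-1 - b) * k.factorial) := by
  set m := ⌈b⌉₊ with hm
  have hbm : b ≤ (m:ℝ) := Nat.le_ceil b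
  have hmb : (m:ℝ) < b + 1 := Nat.ceil_lt_add_one (by linarith)
  set s := (m:ℝ) - b with hs
  have hs0 : 0 ≤ s := by simp [hs]; linarith
  have hs1 : s ≤ 1 := by simp [hs]; linarith
  refine ⟨2 ^ (m + 1), 2 * m + 1, ?_, ?_⟩
  · calc (1:ℝ)/2 ≤ 1 := by norm_num
      _ ≤ 2 ^ (m+1) := one_le_pow₀ one_le_two
  intro k hk
  obtain ⟨n, hkn, hn⟩ : ∃ n : ℕ, k = n + m + 1 ∧ m ≤ n := ⟨k - m - 1, by omega, by omega⟩
  have hkR : (k:ℝ) = (n:ℝ) + (m:ℝ) + 1 := by exact_mod_cast congrArg (Nat.cast (R := ℝ)) hkn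
  have hk0 : (0:ℝ) < k := by rw [hkR]; positivity
  have hbk : b + 1 ≤ (k:ℝ) := by
    have : (m:ℝ) ≤ (n:ℝ) := by exact_mod_cast hn
    rw [hkR]; linarith
  have hx : (1:ℝ) ≤ (n:ℝ) + 1 := by
    have : (0:ℝ) ≤ (n:ℝ) := Nat.cast_nonneg n
    linarith
  have hxs : ((n:ℝ) + 1) + s = (k:ℝ) - b := by rw [hkR, hs]; ring
  have hΓx : Real.Gamma ((n:ℝ) + 1) = n.factorial := Real.Gamma_nat_eq_factorial n
  have hA : (k:ℝ) ^ (s - 1) = (k:ℝ) ^ (-1 - b) * (k:ℝ) ^ (m : ℕ) := by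
    rw [← Real.rpow_natCast (k:ℝ) m, ← Real.rpow_add hk0]
    congr 1; rw [hs]; ring
  have hB : (k:ℝ) ^ s = (k:ℝ) ^ (-1 - b) * (k:ℝ) ^ (m + 1 : ℕ) := by
    rw [← Real.rpow_natCast (k:ℝ) (m+1), ← Real.rpow_add hk0]
    congr 1; rw [hs]; push_cast; ring
  have hknn : (n:ℝ) + 1 ≤ (k:ℝ) := by
    have : (0:ℝ) ≤ (m:ℝ) := Nat.cast_nonneg m
    rw [hkR]; linarith
  refine ⟨hbk, ?_, ?_⟩
  -- lower bound
  · have hg := stmt7_gautschi_lower hx hs0 hs1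
    rw [hxs, hΓx] at hg
    have hmono : (k:ℝ) ^ (s - 1) ≤ ((k:ℝ) - b) ^ (s - 1) := by
      apply Real.rpow_le_rpow_of_nonpos (by linarith) (by linarith) (by linarith)
    have hnat : k.factorial ≤ (n + 1).factorial * k ^ m := by
      have h := stmt7_fact_le m (n + 1)
      rw [show n + 1 + m = k by omega] at h
      calc k.factorial ≤ k ^ m * (n+1).factorial := h
        _ = (n+1).factorial * k ^ m := Nat.mul_comm _ _
    have hnatR : (k.factorial : ℝ) ≤ (n.factorial : ℝ) * ((n:ℝ)+1) * (k:ℝ) ^ (m:ℕ) := by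
      calc (k.factorial : ℝ) ≤ ((n + 1).factorial * k ^ m : ℕ) := by exact_mod_cast hnat
        _ = (n.factorial : ℝ) * ((n:ℝ)+1) * (k:ℝ) ^ (m:ℕ) := by
            push_cast [Nat.factorial_succ]; ring
    have hpos : (0:ℝ) < (k:ℝ) ^ (-1 - b) := Real.rpow_pos_of_pos hk0 _
    calc (1/2) * ((k:ℝ) ^ (-1 - b) * k.factorial) ≤ (k:ℝ) ^ (-1 - b) * k.factorial := by
          nlinarith [mul_pos hpos (show (0:ℝ) < k.factorial by positivity)]
      _ ≤ (k:ℝ) ^ (-1 - b) * ((n.factorial : ℝ) * ((n:ℝ)+1) * (k:ℝ) ^ (m:ℕ)) := by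
          exact mul_le_mul_of_nonneg_left hnatR hpos.le
      _ = (n.factorial : ℝ) * ((n:ℝ)+1) * (k:ℝ) ^ (s - 1) := by rw [hA]; ring
      _ ≤ (n.factorial : ℝ) * ((n:ℝ)+1) * ((k:ℝ) - b) ^ (s - 1) := by
          apply mul_le_mul_of_nonneg_left hmono (by positivity)
      _ ≤ Real.Gamma ((k:ℝ) - b) := hg
  -- upper bound
  · have hg := stmt7_gautschi_upper hx hs0 hs1
    rw [hxs, hΓx] at hg
    have hmono : ((n:ℝ) + 1) ^ s ≤ (k:ℝ) ^ s := Real.rpow_le_rpow (by positivity) hknn hs0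
    have hnat : n.factorial * k ^ (m + 1) ≤ 2 ^ (m + 1) * k.factorial := by
      have h1 : n.factorial * (n + 1) ^ (m + 1) ≤ k.factorial := by
        have := Nat.factorial_mul_pow_le_factorial (m := n) (n := m + 1)
        rwa [show n + (m + 1) = k by omega] at this
      calc n.factorial * k ^ (m+1) ≤ n.factorial * (2 * (n+1)) ^ (m+1) := by
            apply Nat.mul_le_mul_left
            exact Nat.pow_le_pow_left (by omega) _
        _ = 2 ^ (m+1) * (n.factorial * (n+1) ^ (m+1)) := by rw [mul_pow]; ring
        _ ≤ 2 ^ (m+1) * k.factorial := Nat.mul_le_mul_left _ h1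
    have hnatR : (n.factorial : ℝ) * (k:ℝ) ^ (m + 1 : ℕ) ≤ 2 ^ (m+1) * k.factorial := by
      exact_mod_cast hnat
    have hpos : (0:ℝ) < (k:ℝ) ^ (-1 - b) := Real.rpow_pos_of_pos hk0 _
    calc Real.Gamma ((k:ℝ) - b) ≤ (n.factorial : ℝ) * ((n:ℝ) + 1) ^ s := hg
      _ ≤ (n.factorial : ℝ) * (k:ℝ) ^ s := by
          exact mul_le_mul_of_nonneg_left hmono (by positivity)
      _ = (k:ℝ) ^ (-1 - b) * ((n.factorial : ℝ) * (k:ℝ) ^ (m + 1 : ℕ)) := by rw [hB]; ring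
      _ ≤ (k:ℝ) ^ (-1 - b) * (2 ^ (m+1) * k.factorial) :=
          mul_le_mul_of_nonneg_left hnatR hpos.le
      _ = 2 ^ (m + 1) * ((k:ℝ) ^ (-1 - b) * k.factorial) := by ring

lemma stmt7_key_id (c a : ℝ) (hc : 0 < c) (ha0 : 0 < a) (k : ℕ) :
    a * ∫ u in Set.Ioo (0:ℝ) 1, Real.exp (-(c * u ^ (-a))) * (c * u ^ (-a)) ^ k
      = c ^ (1/a) * ∫ t in Set.Ioi c, Real.exp (-t) * t ^ ((k:ℝ) - 1/a - 1) := by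
  set b := 1/a with hb
  have hab : a * b = 1 := by rw [hb]; field_simp
  set g : ℝ → ℝ :=
    (Ioi (1:ℝ)).indicator (fun y => Real.exp (-(c*y)) * (c*y) ^ k * y ^ (-b-1)) with hg
  have step1 : (∫ x in Ioi (0:ℝ), (|(-a)| * x ^ ((-a) - 1)) • g (x ^ (-a)))
      = ∫ y in Ioi (0:ℝ), g y := integral_comp_rpow_Ioi g (neg_ne_zero.mpr ha0.ne')
  -- identify LHS of step1
  have lhs_eq : (∫ x in Ioi (0:ℝ), (|(-a)| * x ^ ((-a) - 1)) • g (x ^ (-a)))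
      = a * ∫ u in Set.Ioo (0:ℝ) 1, Real.exp (-(c * u ^ (-a))) * (c * u ^ (-a)) ^ k := by
    have heq : EqOn (fun x : ℝ => (|(-a)| * x ^ ((-a) - 1)) • g (x ^ (-a)))
        ((Ioo (0:ℝ) 1).indicator
          (fun u => a * (Real.exp (-(c * u ^ (-a))) * (c * u ^ (-a)) ^ k))) (Ioi 0) := by
      intro x hx
      have hx0 : (0:ℝ) < x := hx
      by_cases hx1 : x < 1
      · have h1 : (1:ℝ) < x ^ (-a) :=
          (Real.one_lt_rpow_iff_of_pos hx0).mpr (Or.inr ⟨hx1, by linarith⟩)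
        simp only [hg, Set.indicator_of_mem (mem_Ioi.mpr h1),
          Set.indicator_of_mem (show x ∈ Ioo (0:ℝ) 1 from ⟨hx0, hx1⟩), smul_eq_mul]
        have hpow : (x ^ (-a)) ^ (-b-1) = x ^ ((1:ℝ) + a) := by
          rw [← Real.rpow_mul hx0.le]
          congr 1
          rw [show (-a) * (-b-1) = a*b + a by ring, hab]
        have hone : x ^ (-a-1) * x ^ ((1:ℝ)+a) = 1 := by
          rw [← Real.rpow_add hx0, show (-a-1)+(1+a) = 0 by ring, Real.rpow_zero]
        rw [hpow, abs_neg, abs_of_pos ha0]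
        linear_combination (a * (Real.exp (-(c * x ^ (-a))) * (c * x ^ (-a)) ^ k)) * hone
      · have h1 : x ^ (-a) ≤ 1 :=
          Real.rpow_le_one_of_one_le_of_nonpos (not_lt.mp hx1) (by linarith)
        simp only [hg, Set.indicator_of_notMem (show x ^ (-a) ∉ Ioi (1:ℝ) from not_lt.mpr h1),
          Set.indicator_of_notMem (show x ∉ Ioo (0:ℝ) 1 from fun h => hx1 h.2), smul_zero]
    rw [setIntegral_congr_fun measurableSet_Ioi heq,
      setIntegral_indicator measurableSet_Ioo,
      Set.inter_eq_right.mpr Set.Ioo_subset_Ioi_self, integral_const_mul]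
  -- identify RHS of step1
  have rhs_eq : (∫ y in Ioi (0:ℝ), g y)
      = c ^ b * ∫ t in Set.Ioi c, Real.exp (-t) * t ^ ((k:ℝ) - b - 1) := by
    rw [hg, setIntegral_indicator measurableSet_Ioi,
      Set.inter_eq_right.mpr (Set.Ioi_subset_Ioi zero_le_one)]
    set h : ℝ → ℝ := fun t => Real.exp (-t) * t ^ k * (t/c) ^ (-b-1) with hh
    have hcomp : ∀ y : ℝ, Real.exp (-(c*y)) * (c*y) ^ k * y ^ (-b-1) = h (c*y) := by
      intro y; rw [hh]; simp only []; rw [mul_div_cancel_left₀ _ hc.ne']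
    simp_rw [hcomp]
    rw [integral_comp_mul_left_Ioi h 1 hc, mul_one]
    have hcongr : EqOn h (fun t => c ^ (b+1) * (Real.exp (-t) * t ^ ((k:ℝ) - b - 1))) (Ioi c) := by
      intro t ht
      have ht0 : (0:ℝ) < t := lt_trans hc ht
      rw [hh]; simp only []
      rw [Real.div_rpow ht0.le hc.le, show -b-1 = -(b+1) by ring, Real.rpow_neg hc.le,
        ← Real.rpow_natCast t k, div_eq_mul_inv, inv_inv]
      have htt : t ^ ((k:ℝ)) * t ^ (-(b+1)) = t ^ ((k:ℝ) - b - 1) := by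
        rw [← Real.rpow_add ht0]; congr 1; ring
      linear_combination (Real.exp (-t) * c ^ (b+1)) * htt
    rw [setIntegral_congr_fun measurableSet_Ioi hcongr, integral_const_mul, smul_eq_mul]
    rw [← mul_assoc, Real.rpow_add hc, Real.rpow_one]
    field_simp
  rw [← lhs_eq, step1, rhs_eq]

lemma stmt7_tail_bounds (c s : ℝ) (hc : 0 < c) (hs : 1 ≤ s) :
    Real.Gamma s - c ^ s ≤ (∫ t in Set.Ioi c, Real.exp (-t) * t ^ (s - 1)) ∧
      (∫ t in Set.Ioi c, Real.exp (-t) * t ^ (s - 1)) ≤ Real.Gamma s := by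
  have hs0 : (0:ℝ) < s := by linarith
  have hint : IntegrableOn (fun t : ℝ => Real.exp (-t) * t ^ (s - 1)) (Ioi 0) :=
    Real.GammaIntegral_convergent hs0
  have hsplit : Real.Gamma s
      = (∫ t in Set.Ioc 0 c, Real.exp (-t) * t ^ (s - 1))
        + ∫ t in Set.Ioi c, Real.exp (-t) * t ^ (s - 1) := by
    rw [Real.Gamma_eq_integral hs0, ← Set.Ioc_union_Ioi_eq_Ioi hc.le]
    exact setIntegral_union (Set.Ioc_disjoint_Ioi le_rfl) measurableSet_Ioi
      (hint.mono_set Set.Ioc_subset_Ioi_self) (hint.mono_set (Set.Ioi_subset_Ioi hc.le))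
  have h0 : 0 ≤ ∫ t in Set.Ioc (0:ℝ) c, Real.exp (-t) * t ^ (s - 1) := by
    apply setIntegral_nonneg measurableSet_Ioc
    intro t ht
    have : (0:ℝ) ≤ t := ht.1.le
    positivity
  have h1 : (∫ t in Set.Ioc (0:ℝ) c, Real.exp (-t) * t ^ (s - 1)) ≤ c ^ s := by
    have hb : ∀ t ∈ Set.Ioc (0:ℝ) c, Real.exp (-t) * t ^ (s - 1) ≤ c ^ (s - 1) := by
      intro t ht
      have h2 : t ^ (s - 1) ≤ c ^ (s - 1) :=
        Real.rpow_le_rpow ht.1.le ht.2 (by linarith)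
      have h3 : Real.exp (-t) ≤ 1 := Real.exp_le_one_iff.mpr (by linarith [ht.1])
      calc Real.exp (-t) * t ^ (s - 1) ≤ 1 * c ^ (s - 1) := by
            apply mul_le_mul h3 h2 (Real.rpow_nonneg ht.1.le _) zero_le_one
        _ = c ^ (s - 1) := one_mul _
    calc (∫ t in Set.Ioc (0:ℝ) c, Real.exp (-t) * t ^ (s - 1))
        ≤ ∫ _ in Set.Ioc (0:ℝ) c, c ^ (s - 1) := by
          apply setIntegral_mono_on (hint.mono_set Set.Ioc_subset_Ioi_self)
            (integrableOn_const measure_Ioc_lt_top.ne) measurableSet_Ioc hb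
      _ = c * c ^ (s - 1) := by
          rw [setIntegral_const, Real.volume_real_Ioc_of_le hc.le, smul_eq_mul, sub_zero]
      _ = c ^ s := by
          nth_rewrite 1 [← Real.rpow_one c]
          rw [← Real.rpow_add hc]; norm_num
  constructor
  · linarith [hsplit, h1]
  · linarith [hsplit, h0]

lemma stmt7_small (c b : ℝ) (hc : 0 < c) (hb : 0 < b) :
    ∀ᶠ k : ℕ in atTop, c ^ ((k:ℝ) - b) ≤ (1/4) * ((k:ℝ) ^ (-1 - b) * k.factorial) := by
  have h1 : Tendsto (fun k : ℕ => c ^ (-b) * ((c * Real.exp (1+b)) ^ k / k.factorial))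
      atTop (𝓝 0) := by
    simpa using (FloorSemiring.tendsto_pow_div_factorial_atTop
      (K := ℝ) (c * Real.exp (1+b))).const_mul (c ^ (-b))
  filter_upwards [h1.eventually_le_const (show (0:ℝ) < 1/4 by norm_num),
    eventually_ge_atTop 1] with k hk4 hk1
  have hk0 : (0:ℝ) < k := by exact_mod_cast hk1
  have hfact : (0:ℝ) < k.factorial := by positivity
  have hA : c ^ ((k:ℝ) - b) * (k:ℝ) ^ ((1:ℝ) + b) ≤ c ^ (-b) * (c * Real.exp (1+b)) ^ k := by
    have e1 : c ^ ((k:ℝ) - b) = c ^ (-b) * c ^ k := by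
      rw [show (k:ℝ) - b = -b + (k:ℝ) by ring, Real.rpow_add hc, Real.rpow_natCast]
    have e2 : (k:ℝ) ^ ((1:ℝ) + b) ≤ Real.exp (1+b) ^ k := by
      rw [Real.rpow_def_of_pos hk0, ← Real.exp_nat_mul]
      apply Real.exp_le_exp.mpr
      have hlog : Real.log k ≤ (k:ℝ) := by
        linarith [Real.log_le_sub_one_of_pos hk0]
      nlinarith [Real.log_nonneg (by exact_mod_cast hk1 : (1:ℝ) ≤ (k:ℝ))]
    calc c ^ ((k:ℝ) - b) * (k:ℝ) ^ ((1:ℝ) + b) ≤ (c ^ (-b) * c ^ k) * Real.exp (1+b) ^ k := by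
          rw [← e1]
          exact mul_le_mul_of_nonneg_left e2 (Real.rpow_pos_of_pos hc _).le
      _ = c ^ (-b) * (c * Real.exp (1+b)) ^ k := by rw [mul_pow]; ring
  have hB : c ^ (-b) * (c * Real.exp (1+b)) ^ k ≤ (1/4) * k.factorial := by
    rw [mul_div_assoc'] at hk4
    calc c ^ (-b) * (c * Real.exp (1+b)) ^ k
        = (c ^ (-b) * (c * Real.exp (1+b)) ^ k / k.factorial) * k.factorial := by
          field_simp
      _ ≤ (1/4) * k.factorial := mul_le_mul_of_nonneg_right hk4 hfact.le
  have hP : (0:ℝ) < (k:ℝ) ^ ((1:ℝ) + b) := Real.rpow_pos_of_pos hk0 _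
  have hPmul : (k:ℝ) ^ (-1 - b) * (k:ℝ) ^ ((1:ℝ) + b) = 1 := by
    rw [← Real.rpow_add hk0, show (-1 - b) + (1 + b) = 0 by ring, Real.rpow_zero]
  rw [← mul_le_mul_iff_left₀ hP]
  calc c ^ ((k:ℝ) - b) * (k:ℝ) ^ ((1:ℝ) + b) ≤ (1/4) * k.factorial := le_trans hA hB
    _ = 1/4 * ((k:ℝ) ^ (-1 - b) * ↑k.factorial) * (k:ℝ) ^ ((1:ℝ) + b) := by
        linear_combination (-1/4 * (k.factorial:ℝ)) * hPmul

/-- Power-law tail of the mixed Poisson distribution with parameter `c·U^{-a}`,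
`U` uniform on `(0,1)` and `a ∈ (0,1)`: for large `k` the probability of the
value `k` is of order `k^{-1-1/a}`. -/
theorem stmt7 (c a : ℝ) (hc : 0 < c) (ha0 : 0 < a) (ha1 : a < 1) :
    ∃ c₁ c₂ : ℝ, ∃ K : ℕ, 0 < c₁ ∧ c₁ ≤ c₂ ∧ ∀ k : ℕ, K ≤ k →
      c₁ * (k : ℝ) ^ (-1 - 1 / a)
          ≤ (∫ u in (0:ℝ)..1,
              Real.exp (-(c * u ^ (-a))) * (c * u ^ (-a)) ^ k / (Nat.factorial k : ℝ)) ∧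
      (∫ u in (0:ℝ)..1,
          Real.exp (-(c * u ^ (-a))) * (c * u ^ (-a)) ^ k / (Nat.factorial k : ℝ))
        ≤ c₂ * (k : ℝ) ^ (-1 - 1 / a) := by
  set b := 1/a with hb
  have hb1 : 1 < b := one_lt_one_div ha0 ha1
  have hb0 : 0 < b := by linarith
  obtain ⟨C, M, hC, hM⟩ := stmt7_gamma_ratio b hb1
  obtain ⟨K₀, hK₀⟩ := Filter.eventually_atTop.mp (stmt7_small c b hc hb0)
  have hca : (0:ℝ) < c ^ b / a := by positivity
  refine ⟨c ^ b / a * (1/4), c ^ b / a * C, max M K₀, by positivity, ?_, ?_⟩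
  · exact mul_le_mul_of_nonneg_left (by linarith) hca.le
  intro k hk
  obtain ⟨hbk, hlow, hup⟩ := hM k (le_of_max_le_left hk)
  have hsm := hK₀ k (le_of_max_le_right hk)
  have hfact : (0:ℝ) < k.factorial := by positivity
  have hak : (0:ℝ) < a * k.factorial := by positivity
  set T := ∫ t in Set.Ioi c, Real.exp (-t) * t ^ ((k:ℝ) - b - 1) with hT
  have hkey := stmt7_key_id c a hc ha0 k
  rw [← hb] at hkey
  have hIeq : (∫ u in (0:ℝ)..1,
        Real.exp (-(c * u ^ (-a))) * (c * u ^ (-a)) ^ k / (Nat.factorial k : ℝ))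
      = (c ^ b * T) / (a * k.factorial) := by
    rw [intervalIntegral.integral_of_le zero_le_one,
      MeasureTheory.integral_Ioc_eq_integral_Ioo, integral_div,
      div_eq_div_iff hfact.ne' hak.ne']
    linear_combination (k.factorial:ℝ) * hkey
  have htail := stmt7_tail_bounds c ((k:ℝ) - b) hc (by linarith : 1 ≤ (k:ℝ) - b)
  rw [← hT] at htail
  set X := (k:ℝ) ^ (-1 - b) * (k.factorial:ℝ) with hX
  have hX0 : 0 ≤ X := by
    have : (0:ℝ) ≤ (k:ℝ) ^ (-1 - b) := Real.rpow_nonneg (by positivity) _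
    positivity
  have hTlow : (1/4) * X ≤ T := by
    have := htail.1
    linarith [hlow, hsm]
  have hTup : T ≤ C * X := le_trans htail.2 hup
  rw [hIeq]
  constructor
  · rw [le_div_iff₀ hak]
    calc c ^ b / a * (1/4) * (k:ℝ) ^ (-1 - b) * (a * k.factorial)
        = c ^ b * ((1/4) * X) := by rw [hX]; field_simp
      _ ≤ c ^ b * T := mul_le_mul_of_nonneg_left hTlow (by positivity)
  · rw [div_le_iff₀ hak]
    calc c ^ b * T ≤ c ^ b * (C * X) := mul_le_mul_of_nonneg_left hTup (by positivity)
      _ = c ^ b / a * C * (k:ℝ) ^ (-1 - b) * (a * k.factorial) := by rw [hX]; field_simp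
end

section
/- Let d ≥ 1 be an integer, δ > 1, γ ∈ (0,1) and Γ ≥ 0 be such that γ(δ+1) < δ + Γ. Then there is a constant C > 0, depending only on d, δ, γ, Γ, such that for all β > 0, all x, y ∈ ℝ^d and all 0 < s < t < 1 satisfying |x−y|^d ≥ β s^{−γ} t^{γ−1}, one has ∫_{ℝ^d} ∫_t^1 (t/u)^Γ · ρ_δ(β^{-1} t^γ u^{1−γ} |x−z|^d) · ρ_δ(β^{-1} s^γ u^{1−γ} |y−z|^d) du dz ≤ β C · ρ_δ(β^{-1} s^γ t^{1−γ} |x−y|^d). -/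
open MeasureTheory

namespace Stmt9Aux

open Real Set

lemma rho_nonneg (δ : ℝ) {z : ℝ} (hz : 0 ≤ z) : 0 ≤ rho δ z :=
  le_min zero_le_one (Real.rpow_nonneg hz _)

lemma rho_le_one (δ z : ℝ) : rho δ z ≤ 1 := min_le_left _ _

lemma rho_le_rpow (δ z : ℝ) : rho δ z ≤ z ^ (-δ) := min_le_right _ _

lemma rho_zero {δ : ℝ} (hδ : 0 < δ) : rho δ 0 = 0 := by
  simp [rho, Real.zero_rpow (neg_ne_zero.mpr hδ.ne')]

lemma rho_anti {δ : ℝ} (hδ : 0 < δ) {a b : ℝ} (ha : 0 < a) (hab : a ≤ b) :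
    rho δ b ≤ rho δ a :=
  min_le_min le_rfl (Real.rpow_le_rpow_of_nonpos ha hab (by linarith))

lemma rho_mul_anti {δ : ℝ} (hδ : 0 < δ) {a b w : ℝ} (ha : 0 < a) (hab : a ≤ b)
    (hw : 0 ≤ w) : rho δ (b * w) ≤ rho δ (a * w) := by
  rcases hw.lt_or_eq with h | h
  · exact rho_anti hδ (by positivity) (by nlinarith)
  · rw [← h, mul_zero, mul_zero]

lemma rho_smul_le {δ : ℝ} (hδ : 0 < δ) {c w : ℝ} (hc : 0 < c) (hc1 : c ≤ 1) (hw : 0 ≤ w) :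
    rho δ (c * w) ≤ c ^ (-δ) * rho δ w := by
  rcases hw.lt_or_eq with h | h
  · have h1 : rho δ (c * w) ≤ c ^ (-δ) * 1 := by
      rw [mul_one]
      exact (rho_le_one δ _).trans
        (Real.one_le_rpow_of_pos_of_le_one_of_nonpos hc hc1 (by linarith))
    have h2 : rho δ (c * w) ≤ c ^ (-δ) * w ^ (-δ) := by
      rw [← Real.mul_rpow hc.le h.le]; exact rho_le_rpow δ _
    have h3 := le_min h1 h2
    have h4 : min (c ^ (-δ) * 1) (c ^ (-δ) * w ^ (-δ)) = c ^ (-δ) * min 1 (w ^ (-δ)) := by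
      rcases le_total (1 : ℝ) (w ^ (-δ)) with hc' | hc'
      · rw [min_eq_left hc', min_eq_left]
        exact mul_le_mul_of_nonneg_left hc' (Real.rpow_nonneg hc.le _)
      · rw [min_eq_right hc', min_eq_right]
        exact mul_le_mul_of_nonneg_left hc' (Real.rpow_nonneg hc.le _)
    rw [h4] at h3
    exact h3
  · rw [← h, mul_zero, rho_zero hδ, mul_zero]

lemma measurable_rho (δ : ℝ) : Measurable (rho δ) := by
  unfold rho; fun_prop

lemma rpow_neg_mul_swap {b w p q : ℝ} (hb : 0 < b) (hw : 0 < w) (hp : 0 < p) (hq : 0 < q)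
    (δ : ℝ) : (b * p * w) ^ (-δ) = (b * q * w) ^ (-δ) * q ^ δ * p ^ (-δ) := by
  have h1 : (b * p * w) ^ (-δ) = b ^ (-δ) * p ^ (-δ) * w ^ (-δ) := by
    rw [Real.mul_rpow (by positivity) hw.le, Real.mul_rpow hb.le hp.le]
  have h2 : (b * q * w) ^ (-δ) = b ^ (-δ) * q ^ (-δ) * w ^ (-δ) := by
    rw [Real.mul_rpow (by positivity) hw.le, Real.mul_rpow hb.le hq.le]
  have h3 : q ^ (-δ) * q ^ δ = 1 := by
    rw [← Real.rpow_add hq, neg_add_cancel, Real.rpow_zero]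
  rw [h1, h2]
  linear_combination (-(b ^ (-δ) * w ^ (-δ) * p ^ (-δ))) * h3

lemma rpow_neg_mul_swap₂ {b w p1 p2 q1 q2 : ℝ} (hb : 0 < b) (hw : 0 < w) (hp1 : 0 < p1)
    (hp2 : 0 < p2) (hq1 : 0 < q1) (hq2 : 0 < q2) (δ : ℝ) :
    (b * p1 * p2 * w) ^ (-δ) =
      (b * q1 * q2 * w) ^ (-δ) * (q1 ^ δ * p1 ^ (-δ)) * (q2 ^ δ * p2 ^ (-δ)) := by
  have h1 : (b * p1 * p2 * w) ^ (-δ) = b ^ (-δ) * p1 ^ (-δ) * p2 ^ (-δ) * w ^ (-δ) := by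
    rw [Real.mul_rpow (by positivity) hw.le, Real.mul_rpow (by positivity) hp2.le,
      Real.mul_rpow hb.le hp1.le]
  have h2 : (b * q1 * q2 * w) ^ (-δ) = b ^ (-δ) * q1 ^ (-δ) * q2 ^ (-δ) * w ^ (-δ) := by
    rw [Real.mul_rpow (by positivity) hw.le, Real.mul_rpow (by positivity) hq2.le,
      Real.mul_rpow hb.le hq1.le]
  have h3 : q1 ^ (-δ) * q1 ^ δ = 1 := by
    rw [← Real.rpow_add hq1, neg_add_cancel, Real.rpow_zero]
  have h4 : q2 ^ (-δ) * q2 ^ δ = 1 := by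
    rw [← Real.rpow_add hq2, neg_add_cancel, Real.rpow_zero]
  rw [h1, h2]
  linear_combination
    (-(b ^ (-δ) * p1 ^ (-δ) * p2 ^ (-δ) * w ^ (-δ) * q2 ^ (-δ) * q2 ^ δ)) * h3 +
    (-(b ^ (-δ) * p1 ^ (-δ) * p2 ^ (-δ) * w ^ (-δ))) * h4

lemma rho_norm_integrable (d : ℕ) (hd : 1 ≤ d) {δ : ℝ} (hδ : 1 < δ) {c : ℝ} (hc : 0 < c) :
    Integrable (fun z : EuclideanSpace ℝ (Fin d) => rho δ (c * ‖z‖ ^ (d : ℝ))) := by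
  have hd1 : (1 : ℝ) ≤ (d : ℝ) := by exact_mod_cast hd
  have hdd : (Module.finrank ℝ (EuclideanSpace ℝ (Fin d)) : ℝ) < (d : ℝ) * δ := by
    rw [finrank_euclideanSpace_fin]
    nlinarith
  set M : ℝ := max 1 (c ^ (-δ)) with hM
  have hM1 : (1 : ℝ) ≤ M := le_max_left _ _
  have h2d : (0 : ℝ) < (2 : ℝ) ^ ((d : ℝ) * δ) := Real.rpow_pos_of_pos two_pos _
  have hint := (integrable_one_add_norm (E := EuclideanSpace ℝ (Fin d)) (μ := volume)
    hdd).const_mul (M * 2 ^ ((d : ℝ) * δ))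
  refine hint.mono' ?_ ?_
  · exact ((measurable_rho δ).comp (by fun_prop)).aestronglyMeasurable
  · filter_upwards with z
    have hn0 : (0 : ℝ) ≤ ‖z‖ := norm_nonneg z
    rw [Real.norm_of_nonneg (rho_nonneg δ (by positivity))]
    have h2inv : (2 : ℝ) ^ ((d : ℝ) * δ) * 2 ^ (-((d : ℝ) * δ)) = 1 := by
      rw [← Real.rpow_add two_pos, add_neg_cancel, Real.rpow_zero]
    rcases le_total ‖z‖ 1 with h1 | h1
    · have hA : (2 : ℝ) ^ (-((d : ℝ) * δ)) ≤ (1 + ‖z‖) ^ (-((d : ℝ) * δ)) :=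
        Real.rpow_le_rpow_of_nonpos (by positivity) (by linarith) (by nlinarith)
      have key : M * 2 ^ ((d : ℝ) * δ) * (2 : ℝ) ^ (-((d : ℝ) * δ)) ≤
          M * 2 ^ ((d : ℝ) * δ) * (1 + ‖z‖) ^ (-((d : ℝ) * δ)) :=
        mul_le_mul_of_nonneg_left hA (by positivity)
      have key2 : M * 2 ^ ((d : ℝ) * δ) * (2 : ℝ) ^ (-((d : ℝ) * δ)) = M := by
        rw [mul_assoc, h2inv, mul_one]
      have := rho_le_one δ (c * ‖z‖ ^ (d : ℝ))
      linarith
    · have hn0' : (0 : ℝ) < ‖z‖ := lt_of_lt_of_le one_pos h1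
      have e1 : rho δ (c * ‖z‖ ^ (d : ℝ)) ≤ c ^ (-δ) * ‖z‖ ^ (-((d : ℝ) * δ)) := by
        refine (rho_le_rpow δ _).trans_eq ?_
        rw [Real.mul_rpow hc.le (by positivity), ← Real.rpow_mul hn0,
          show (d : ℝ) * -δ = -((d : ℝ) * δ) by ring]
      have e2 : ((2 : ℝ) * ‖z‖) ^ (-((d : ℝ) * δ)) ≤ (1 + ‖z‖) ^ (-((d : ℝ) * δ)) :=
        Real.rpow_le_rpow_of_nonpos (by positivity) (by linarith) (by nlinarith)
      have e3 : ((2 : ℝ) * ‖z‖) ^ (-((d : ℝ) * δ)) =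
          2 ^ (-((d : ℝ) * δ)) * ‖z‖ ^ (-((d : ℝ) * δ)) :=
        Real.mul_rpow (by norm_num) hn0
      have e4 : c ^ (-δ) ≤ M := le_max_right _ _
      have hz1 : (0:ℝ) ≤ ‖z‖ ^ (-((d : ℝ) * δ)) := Real.rpow_nonneg hn0 _
      calc rho δ (c * ‖z‖ ^ (d : ℝ)) ≤ c ^ (-δ) * ‖z‖ ^ (-((d : ℝ) * δ)) := e1
        _ ≤ M * ‖z‖ ^ (-((d : ℝ) * δ)) := mul_le_mul_of_nonneg_right e4 hz1
        _ = M * 2 ^ ((d : ℝ) * δ) * ((2:ℝ) * ‖z‖) ^ (-((d : ℝ) * δ)) := by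
            rw [e3]; linear_combination (-(M * ‖z‖ ^ (-((d : ℝ) * δ)))) * h2inv
        _ ≤ M * 2 ^ ((d : ℝ) * δ) * (1 + ‖z‖) ^ (-((d : ℝ) * δ)) :=
            mul_le_mul_of_nonneg_left e2 (by positivity)

lemma integral_rho_shift (d : ℕ) (hd : 1 ≤ d) {δ : ℝ} (hδ : 1 < δ) {c : ℝ} (hc : 0 < c)
    (x : EuclideanSpace ℝ (Fin d)) :
    ∫ z : EuclideanSpace ℝ (Fin d), rho δ (c * ‖x - z‖ ^ (d : ℝ)) =
      c⁻¹ * ∫ z : EuclideanSpace ℝ (Fin d), rho δ (‖z‖ ^ (d : ℝ)) := by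
  have hdR : ((d : ℝ)) ≠ 0 := by positivity
  have h1 : ∫ z : EuclideanSpace ℝ (Fin d), rho δ (c * ‖x - z‖ ^ (d : ℝ)) =
      ∫ z : EuclideanSpace ℝ (Fin d), rho δ (c * ‖z‖ ^ (d : ℝ)) :=
    integral_sub_left_eq_self (fun z => rho δ (c * ‖z‖ ^ (d : ℝ))) volume x
  rw [h1]
  set R : ℝ := c ^ (-(d : ℝ)⁻¹) with hR
  have hR0 : 0 < R := Real.rpow_pos_of_pos hc _
  have hRd : R ^ (d : ℝ) = c⁻¹ := by
    rw [hR, ← Real.rpow_mul hc.le, show -(d : ℝ)⁻¹ * (d : ℝ) = -1 by field_simp,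
      Real.rpow_neg_one]
  have key := Measure.integral_comp_smul_of_nonneg (volume : Measure (EuclideanSpace ℝ (Fin d)))
      (fun z => rho δ (c * ‖z‖ ^ (d : ℝ))) R (hR := hR0.le)
  have h2 : ∀ z : EuclideanSpace ℝ (Fin d),
      rho δ (c * ‖R • z‖ ^ (d : ℝ)) = rho δ (‖z‖ ^ (d : ℝ)) := by
    intro z
    rw [norm_smul, Real.norm_eq_abs, abs_of_pos hR0,
      Real.mul_rpow hR0.le (norm_nonneg z), hRd]
    congr 1
    field_simp
  simp only [h2] at key
  have hfr : ((R : ℝ) ^ Module.finrank ℝ (EuclideanSpace ℝ (Fin d)) : ℝ) = c⁻¹ := by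
    rw [finrank_euclideanSpace_fin, ← Real.rpow_natCast R d, hRd]
  rw [hfr] at key
  rw [key, smul_eq_mul, inv_inv, ← mul_assoc, inv_mul_cancel₀ hc.ne', one_mul]

lemma integrableOn_Ioc_of_bounded {f : ℝ → ℝ} {a b M : ℝ}
    (hm : AEStronglyMeasurable f (volume.restrict (Set.Ioc a b)))
    (hb : ∀ u ∈ Set.Ioc a b, ‖f u‖ ≤ M) : IntegrableOn f (Set.Ioc a b) :=
  Integrable.mono' ((integrableOn_const_iff (C := M)).mpr (Or.inr measure_Ioc_lt_top)) hm
    ((ae_restrict_iff' measurableSet_Ioc).mpr (Filter.Eventually.of_forall hb))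

end Stmt9Aux

set_option maxHeartbeats 1000000 in
open Stmt9Aux in
/-- Two-connection lemma (subcritical case `γ(δ+1) < δ + Γ`): the expected number
of two-step connectors younger than both endpoints is at most `βC` times the
direct arc probability, provided the endpoints are sufficiently far apart. -/
theorem stmt9 (d : ℕ) (hd : 1 ≤ d) (δ γ Γ : ℝ) (hδ : 1 < δ) (hγ0 : 0 < γ)
    (hγ1 : γ < 1) (hΓ : 0 ≤ Γ) (h : γ * (δ + 1) < δ + Γ) :
    ∃ C : ℝ, 0 < C ∧ ∀ β : ℝ, 0 < β → ∀ x y : EuclideanSpace ℝ (Fin d),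
      ∀ s t : ℝ, 0 < s → s < t → t < 1 →
      β * s ^ (-γ) * t ^ (γ - 1) ≤ ‖x - y‖ ^ (d : ℝ) →
      (∫ z : EuclideanSpace ℝ (Fin d), ∫ u in t..1, (t / u) ^ Γ *
            rho δ (β⁻¹ * t ^ γ * u ^ (1 - γ) * ‖x - z‖ ^ (d : ℝ)) *
            rho δ (β⁻¹ * s ^ γ * u ^ (1 - γ) * ‖y - z‖ ^ (d : ℝ)))
        ≤ β * C * rho δ (β⁻¹ * s ^ γ * t ^ (1 - γ) * ‖x - y‖ ^ (d : ℝ)) := by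
  have hδ0 : (0:ℝ) < δ := lt_trans one_pos hδ
  have hγ1' : (0:ℝ) ≤ 1 - γ := by linarith
  set A : ℝ := Γ + (1 - γ) * δ - γ with hA
  have hA0 : 0 < A := by nlinarith
  set K : ℝ := ∫ z : EuclideanSpace ℝ (Fin d), rho δ (‖z‖ ^ (d : ℝ)) with hK
  have hK0 : 0 ≤ K := integral_nonneg fun z => rho_nonneg δ (by positivity)
  have h2d : (0:ℝ) < 2 ^ ((d:ℝ) * δ) := Real.rpow_pos_of_pos two_pos _
  refine ⟨2 * 2 ^ ((d : ℝ) * δ) * K / A + 1, by positivity, ?_⟩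
  intro β hβ x y s t hs hst ht1 hxy
  have ht : 0 < t := hs.trans hst
  have hβi : 0 < β⁻¹ := by positivity
  have hdR : ((d:ℝ)) ≠ 0 := by positivity
  have hr : 0 < ‖x - y‖ := by
    rcases (norm_nonneg (x - y)).lt_or_eq with h' | h'
    · exact h'
    · exfalso
      rw [← h', Real.zero_rpow hdR] at hxy
      have hpos : 0 < β * s ^ (-γ) * t ^ (γ - 1) := by
        have h1 := Real.rpow_pos_of_pos hs (-γ)
        have h2 := Real.rpow_pos_of_pos ht (γ - 1)
        positivity
      linarith
  have hsγ : 0 < s ^ γ := Real.rpow_pos_of_pos hs _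
  have htγ : 0 < t ^ γ := Real.rpow_pos_of_pos ht _
  have ht1γ : 0 < t ^ (1 - γ) := Real.rpow_pos_of_pos ht _
  have hrd : 0 < ‖x - y‖ ^ (d:ℝ) := Real.rpow_pos_of_pos hr _
  set Rv : ℝ := (β⁻¹ * s ^ γ * t ^ (1 - γ) * ‖x - y‖ ^ (d : ℝ)) ^ (-δ) with hRv
  have hRv0 : 0 ≤ Rv := Real.rpow_nonneg (by positivity) _
  have harg1 : 1 ≤ β⁻¹ * s ^ γ * t ^ (1 - γ) * ‖x - y‖ ^ (d : ℝ) := by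
    have hprod : β⁻¹ * s ^ γ * t ^ (1 - γ) * (β * s ^ (-γ) * t ^ (γ - 1)) = 1 := by
      rw [Real.rpow_neg hs.le, show γ - 1 = -(1 - γ) by ring, Real.rpow_neg ht.le]
      field_simp
    calc (1:ℝ) = β⁻¹ * s ^ γ * t ^ (1 - γ) * (β * s ^ (-γ) * t ^ (γ - 1)) := hprod.symm
      _ ≤ β⁻¹ * s ^ γ * t ^ (1 - γ) * ‖x - y‖ ^ (d:ℝ) :=
          mul_le_mul_of_nonneg_left hxy (by positivity)
  have hrho_eq : rho δ (β⁻¹ * s ^ γ * t ^ (1 - γ) * ‖x - y‖ ^ (d : ℝ)) = Rv :=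
    min_eq_right (Real.rpow_le_one_of_one_le_of_nonpos harg1 (by linarith))
  set B : ℝ := 2 ^ ((d:ℝ) * δ) * Rv * t ^ ((1 - γ) * δ) with hB
  have hB0 : 0 ≤ B := by
    apply mul_nonneg (mul_nonneg h2d.le hRv0) (Real.rpow_nonneg ht.le _)
  set c1 : ℝ → ℝ := fun u => B * ((t / u) ^ Γ * u ^ (-((1 - γ) * δ))) with hc1
  set c2 : ℝ → ℝ := fun u => (s / t) ^ (γ * δ) * c1 u with hc2
  set g1 : EuclideanSpace ℝ (Fin d) → ℝ → ℝ := fun z u =>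
    c1 u * rho δ (β⁻¹ * t ^ γ * u ^ (1 - γ) * ‖x - z‖ ^ (d : ℝ)) with hg1
  set g2 : EuclideanSpace ℝ (Fin d) → ℝ → ℝ := fun z u =>
    c2 u * rho δ (β⁻¹ * s ^ γ * u ^ (1 - γ) * ‖y - z‖ ^ (d : ℝ)) with hg2
  have hstle1 : (s / t) ^ (γ * δ) ≤ 1 :=
    Real.rpow_le_one (by positivity) (by rw [div_le_one ht]; exact hst.le) (by positivity)
  have hstnn : (0:ℝ) ≤ (s / t) ^ (γ * δ) := Real.rpow_nonneg (by positivity) _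
  have hc1nn : ∀ u ∈ Set.Ioc t 1, 0 ≤ c1 u := by
    intro u hu
    have hu0 : 0 < u := ht.trans hu.1
    exact mul_nonneg hB0 (mul_nonneg (Real.rpow_nonneg (by positivity) _)
      (Real.rpow_nonneg hu0.le _))
  have hc2nn : ∀ u ∈ Set.Ioc t 1, 0 ≤ c2 u := fun u hu => mul_nonneg hstnn (hc1nn u hu)
  set c1max : ℝ := B * t ^ (-((1 - γ) * δ)) with hc1max
  have hc1maxnn : 0 ≤ c1max := mul_nonneg hB0 (Real.rpow_nonneg ht.le _)
  have hc1le : ∀ u ∈ Set.Ioc t 1, c1 u ≤ c1max := by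
    intro u hu
    have hu0 : 0 < u := ht.trans hu.1
    have e1 : (t / u) ^ Γ ≤ 1 :=
      Real.rpow_le_one (by positivity) (by rw [div_le_one hu0]; exact hu.1.le) hΓ
    have e2 : u ^ (-((1 - γ) * δ)) ≤ t ^ (-((1 - γ) * δ)) :=
      Real.rpow_le_rpow_of_nonpos ht hu.1.le (by nlinarith)
    calc c1 u = B * ((t / u) ^ Γ * u ^ (-((1 - γ) * δ))) := rfl
      _ ≤ B * (1 * t ^ (-((1 - γ) * δ))) := by
          apply mul_le_mul_of_nonneg_left _ hB0
          exact mul_le_mul e1 e2 (Real.rpow_nonneg hu0.le _) zero_le_one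
      _ = c1max := by rw [one_mul]
  have hc2le : ∀ u ∈ Set.Ioc t 1, c2 u ≤ c1max := by
    intro u hu
    calc c2 u = (s / t) ^ (γ * δ) * c1 u := rfl
      _ ≤ 1 * c1 u := mul_le_mul_of_nonneg_right hstle1 (hc1nn u hu)
      _ = c1 u := one_mul _
      _ ≤ c1max := hc1le u hu
  -- far point bound
  have hfar : ∀ (b : ℝ), 0 < b → ∀ u : ℝ, 0 < u → ∀ w : ℝ, ‖x - y‖ / 2 ≤ w →
      rho δ (β⁻¹ * b * u ^ (1 - γ) * w ^ (d:ℝ)) ≤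
        2 ^ ((d:ℝ) * δ) * ((β⁻¹ * b * u ^ (1 - γ) * ‖x - y‖ ^ (d:ℝ)) ^ (-δ)) := by
    intro b hb u hu0 w hw
    have hw0 : 0 < w := lt_of_lt_of_le (by positivity) hw
    have hu1γ : 0 < u ^ (1 - γ) := Real.rpow_pos_of_pos hu0 _
    have ha : 0 < β⁻¹ * b * u ^ (1 - γ) := by positivity
    have s1 : rho δ (β⁻¹ * b * u ^ (1 - γ) * w ^ (d:ℝ)) ≤
        rho δ (β⁻¹ * b * u ^ (1 - γ) * (‖x - y‖ / 2) ^ (d:ℝ)) := by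
      apply rho_anti hδ0 (by positivity)
      exact mul_le_mul_of_nonneg_left
        (Real.rpow_le_rpow (by positivity) hw (by positivity)) ha.le
    have s2 : β⁻¹ * b * u ^ (1 - γ) * (‖x - y‖ / 2) ^ (d:ℝ) =
        (2:ℝ) ^ (-(d:ℝ)) * (β⁻¹ * b * u ^ (1 - γ) * ‖x - y‖ ^ (d:ℝ)) := by
      rw [Real.div_rpow (norm_nonneg _) (by norm_num : (0:ℝ) ≤ 2),
        Real.rpow_neg (by norm_num : (0:ℝ) ≤ 2)]
      ring
    have s3 : rho δ ((2:ℝ) ^ (-(d:ℝ)) * (β⁻¹ * b * u ^ (1 - γ) * ‖x - y‖ ^ (d:ℝ))) ≤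
        ((2:ℝ) ^ (-(d:ℝ))) ^ (-δ) * rho δ (β⁻¹ * b * u ^ (1 - γ) * ‖x - y‖ ^ (d:ℝ)) := by
      apply rho_smul_le hδ0 (by positivity)
      · exact Real.rpow_le_one_of_one_le_of_nonpos (by norm_num)
          (neg_nonpos.mpr (by positivity))
      · positivity
    have s4 : ((2:ℝ) ^ (-(d:ℝ))) ^ (-δ) = 2 ^ ((d:ℝ) * δ) := by
      rw [← Real.rpow_mul (by norm_num : (0:ℝ) ≤ 2), neg_mul_neg]
    have s5 := rho_le_rpow δ (β⁻¹ * b * u ^ (1 - γ) * ‖x - y‖ ^ (d:ℝ))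
    calc rho δ (β⁻¹ * b * u ^ (1 - γ) * w ^ (d:ℝ))
        ≤ rho δ (β⁻¹ * b * u ^ (1 - γ) * (‖x - y‖ / 2) ^ (d:ℝ)) := s1
      _ = rho δ ((2:ℝ) ^ (-(d:ℝ)) * (β⁻¹ * b * u ^ (1 - γ) * ‖x - y‖ ^ (d:ℝ))) := by rw [s2]
      _ ≤ ((2:ℝ) ^ (-(d:ℝ))) ^ (-δ) * rho δ (β⁻¹ * b * u ^ (1 - γ) * ‖x - y‖ ^ (d:ℝ)) := s3
      _ = 2 ^ ((d:ℝ) * δ) * rho δ (β⁻¹ * b * u ^ (1 - γ) * ‖x - y‖ ^ (d:ℝ)) := by rw [s4]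
      _ ≤ 2 ^ ((d:ℝ) * δ) * ((β⁻¹ * b * u ^ (1 - γ) * ‖x - y‖ ^ (d:ℝ)) ^ (-δ)) :=
          mul_le_mul_of_nonneg_left s5 h2d.le
  have hq2 : (t ^ (1 - γ) : ℝ) ^ δ = t ^ ((1 - γ) * δ) := by
    rw [← Real.rpow_mul ht.le]
  have hp2 : ∀ u : ℝ, 0 < u → ((u ^ (1 - γ) : ℝ)) ^ (-δ) = u ^ (-((1 - γ) * δ)) := by
    intro u hu0
    rw [← Real.rpow_mul hu0.le, show (1 - γ) * (-δ) = -((1 - γ) * δ) by ring]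
  have ident2 : ∀ u : ℝ, 0 < u →
      (β⁻¹ * s ^ γ * u ^ (1 - γ) * ‖x - y‖ ^ (d:ℝ)) ^ (-δ) =
        Rv * (t ^ (1 - γ)) ^ δ * (u ^ (1 - γ)) ^ (-δ) := by
    intro u hu0
    rw [hRv]
    exact rpow_neg_mul_swap (by positivity : (0:ℝ) < β⁻¹ * s ^ γ) hrd
      (Real.rpow_pos_of_pos hu0 _) ht1γ δ
  have ident1 : ∀ u : ℝ, 0 < u →
      (β⁻¹ * t ^ γ * u ^ (1 - γ) * ‖x - y‖ ^ (d:ℝ)) ^ (-δ) =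
        Rv * ((s ^ γ) ^ δ * (t ^ γ) ^ (-δ)) * ((t ^ (1 - γ)) ^ δ * (u ^ (1 - γ)) ^ (-δ)) := by
    intro u hu0
    rw [hRv]
    exact rpow_neg_mul_swap₂ hβi hrd htγ (Real.rpow_pos_of_pos hu0 _) hsγ ht1γ δ
  have hsγδ : (s ^ γ : ℝ) ^ δ * (t ^ γ) ^ (-δ) = (s / t) ^ (γ * δ) := by
    rw [Real.div_rpow hs.le ht.le, ← Real.rpow_mul hs.le, ← Real.rpow_mul ht.le,
      show γ * (-δ) = -(γ * δ) by ring, Real.rpow_neg ht.le, div_eq_mul_inv]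
  have key2 : ∀ (z : EuclideanSpace ℝ (Fin d)), ∀ u ∈ Set.Ioc t 1, ‖x - y‖ / 2 ≤ ‖y - z‖ →
      rho δ (β⁻¹ * s ^ γ * u ^ (1 - γ) * ‖y - z‖ ^ (d:ℝ)) ≤ B * u ^ (-((1 - γ) * δ)) := by
    intro z u hu hyz
    have hu0 : 0 < u := ht.trans hu.1
    refine (hfar (s ^ γ) hsγ u hu0 _ hyz).trans ?_
    rw [ident2 u hu0, hq2, hp2 u hu0, hB]
    exact le_of_eq (by ring)
  have key1 : ∀ (z : EuclideanSpace ℝ (Fin d)), ∀ u ∈ Set.Ioc t 1, ‖x - y‖ / 2 ≤ ‖x - z‖ →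
      rho δ (β⁻¹ * t ^ γ * u ^ (1 - γ) * ‖x - z‖ ^ (d:ℝ)) ≤
        (s / t) ^ (γ * δ) * (B * u ^ (-((1 - γ) * δ))) := by
    intro z u hu hxz
    have hu0 : 0 < u := ht.trans hu.1
    refine (hfar (t ^ γ) htγ u hu0 _ hxz).trans ?_
    rw [ident1 u hu0, hsγδ, hq2, hp2 u hu0, hB]
    exact le_of_eq (by ring)
  -- pointwise bound
  have hpt : ∀ (z : EuclideanSpace ℝ (Fin d)), ∀ u ∈ Set.Ioc t 1,
      (t / u) ^ Γ * rho δ (β⁻¹ * t ^ γ * u ^ (1 - γ) * ‖x - z‖ ^ (d : ℝ)) *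
        rho δ (β⁻¹ * s ^ γ * u ^ (1 - γ) * ‖y - z‖ ^ (d : ℝ)) ≤ g1 z u + g2 z u := by
    intro z u hu
    have hu0 : 0 < u := ht.trans hu.1
    have hQ : 0 ≤ (t / u) ^ Γ := Real.rpow_nonneg (by positivity) _
    have hrho1nn : 0 ≤ rho δ (β⁻¹ * t ^ γ * u ^ (1 - γ) * ‖x - z‖ ^ (d:ℝ)) := by
      apply rho_nonneg
      have : (0:ℝ) ≤ u ^ (1 - γ) := Real.rpow_nonneg hu0.le _
      positivity
    have hrho2nn : 0 ≤ rho δ (β⁻¹ * s ^ γ * u ^ (1 - γ) * ‖y - z‖ ^ (d:ℝ)) := by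
      apply rho_nonneg
      have : (0:ℝ) ≤ u ^ (1 - γ) := Real.rpow_nonneg hu0.le _
      positivity
    have hg1nn : 0 ≤ g1 z u := mul_nonneg (hc1nn u hu) hrho1nn
    have hg2nn : 0 ≤ g2 z u := mul_nonneg (hc2nn u hu) hrho2nn
    have tri : ‖x - y‖ ≤ ‖x - z‖ + ‖y - z‖ := by
      have e : x - y = (x - z) - (y - z) := by abel
      rw [e]; exact norm_sub_le _ _
    rcases le_or_gt (‖x - y‖ / 2) ‖y - z‖ with hyz | hyz
    · have k := key2 z u hu hyz
      have step : (t / u) ^ Γ * rho δ (β⁻¹ * t ^ γ * u ^ (1 - γ) * ‖x - z‖ ^ (d:ℝ)) *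
          rho δ (β⁻¹ * s ^ γ * u ^ (1 - γ) * ‖y - z‖ ^ (d:ℝ)) ≤
            (t / u) ^ Γ * rho δ (β⁻¹ * t ^ γ * u ^ (1 - γ) * ‖x - z‖ ^ (d:ℝ)) *
              (B * u ^ (-((1 - γ) * δ))) :=
        mul_le_mul_of_nonneg_left k (mul_nonneg hQ hrho1nn)
      refine step.trans ?_
      have : (t / u) ^ Γ * rho δ (β⁻¹ * t ^ γ * u ^ (1 - γ) * ‖x - z‖ ^ (d:ℝ)) *
          (B * u ^ (-((1 - γ) * δ))) = g1 z u := by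
        simp only [hg1, hc1]; ring
      rw [this]
      exact le_add_of_nonneg_right hg2nn
    · have hxz : ‖x - y‖ / 2 ≤ ‖x - z‖ := by linarith
      have k := key1 z u hu hxz
      have step : (t / u) ^ Γ * rho δ (β⁻¹ * t ^ γ * u ^ (1 - γ) * ‖x - z‖ ^ (d:ℝ)) *
          rho δ (β⁻¹ * s ^ γ * u ^ (1 - γ) * ‖y - z‖ ^ (d:ℝ)) ≤
            (t / u) ^ Γ * ((s / t) ^ (γ * δ) * (B * u ^ (-((1 - γ) * δ)))) *
              rho δ (β⁻¹ * s ^ γ * u ^ (1 - γ) * ‖y - z‖ ^ (d:ℝ)) :=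
        mul_le_mul_of_nonneg_right (mul_le_mul_of_nonneg_left k hQ) hrho2nn
      refine step.trans ?_
      have : (t / u) ^ Γ * ((s / t) ^ (γ * δ) * (B * u ^ (-((1 - γ) * δ)))) *
          rho δ (β⁻¹ * s ^ γ * u ^ (1 - γ) * ‖y - z‖ ^ (d:ℝ)) = g2 z u := by
        simp only [hg2, hc2, hc1]; ring
      rw [this]
      exact le_add_of_nonneg_left hg1nn
  -- measurability
  have hc1meas : Measurable c1 := by rw [hc1]; fun_prop
  have hg1meas : Measurable (fun q : (EuclideanSpace ℝ (Fin d)) × ℝ => g1 q.1 q.2) := by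
    simp only [hg1]
    exact (hc1meas.comp measurable_snd).mul ((measurable_rho δ).comp (by fun_prop))
  have hg2meas : Measurable (fun q : (EuclideanSpace ℝ (Fin d)) × ℝ => g2 q.1 q.2) := by
    simp only [hg2, hc2]
    exact ((measurable_const.mul hc1meas).comp measurable_snd).mul
      ((measurable_rho δ).comp (by fun_prop))
  -- per-z integrability
  have hg1z : ∀ z : EuclideanSpace ℝ (Fin d), IntegrableOn (fun u => g1 z u) (Set.Ioc t 1) := by
    intro z
    apply integrableOn_Ioc_of_bounded (M := c1max)
    · have : Measurable (fun u => g1 z u) := by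
        simp only [hg1]
        exact hc1meas.mul ((measurable_rho δ).comp (by fun_prop))
      exact this.aestronglyMeasurable
    · intro u hu
      have hu0 : 0 < u := ht.trans hu.1
      have hrnn : 0 ≤ rho δ (β⁻¹ * t ^ γ * u ^ (1 - γ) * ‖x - z‖ ^ (d:ℝ)) := by
        apply rho_nonneg
        have : (0:ℝ) ≤ u ^ (1 - γ) := Real.rpow_nonneg hu0.le _
        positivity
      rw [Real.norm_of_nonneg (mul_nonneg (hc1nn u hu) hrnn)]
      calc c1 u * rho δ (β⁻¹ * t ^ γ * u ^ (1 - γ) * ‖x - z‖ ^ (d:ℝ)) ≤ c1max * 1 :=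
            mul_le_mul (hc1le u hu) (rho_le_one δ _) hrnn hc1maxnn
        _ = c1max := mul_one _
  have hg2z : ∀ z : EuclideanSpace ℝ (Fin d), IntegrableOn (fun u => g2 z u) (Set.Ioc t 1) := by
    intro z
    apply integrableOn_Ioc_of_bounded (M := c1max)
    · have : Measurable (fun u => g2 z u) := by
        simp only [hg2, hc2]
        exact (measurable_const.mul hc1meas).mul ((measurable_rho δ).comp (by fun_prop))
      exact this.aestronglyMeasurable
    · intro u hu
      have hu0 : 0 < u := ht.trans hu.1
      have hrnn : 0 ≤ rho δ (β⁻¹ * s ^ γ * u ^ (1 - γ) * ‖y - z‖ ^ (d:ℝ)) := by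
        apply rho_nonneg
        have : (0:ℝ) ≤ u ^ (1 - γ) := Real.rpow_nonneg hu0.le _
        positivity
      rw [Real.norm_of_nonneg (mul_nonneg (hc2nn u hu) hrnn)]
      calc c2 u * rho δ (β⁻¹ * s ^ γ * u ^ (1 - γ) * ‖y - z‖ ^ (d:ℝ)) ≤ c1max * 1 :=
            mul_le_mul (hc2le u hu) (rho_le_one δ _) hrnn hc1maxnn
        _ = c1max := mul_one _
  -- product integrability
  have hae2 : ∀ᵐ p : (EuclideanSpace ℝ (Fin d)) × ℝ
      ∂((volume : Measure (EuclideanSpace ℝ (Fin d))).prod (volume.restrict (Set.Ioc t 1))),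
      p.2 ∈ Set.Ioc t 1 := by
    have hmem := ae_restrict_mem (μ := ((volume : Measure (EuclideanSpace ℝ (Fin d))).prod
      (volume : Measure ℝ)))
      ((MeasurableSet.univ).prod (measurableSet_Ioc : MeasurableSet (Set.Ioc t 1)))
    rw [← Measure.prod_restrict, Measure.restrict_univ] at hmem
    exact hmem.mono fun p hp => hp.2
  have hshift : ∀ (c : ℝ), 0 < c → ∀ p : EuclideanSpace ℝ (Fin d),
      Integrable (fun z : EuclideanSpace ℝ (Fin d) => rho δ (c * ‖p - z‖ ^ (d:ℝ))) := by
    intro c hc p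
    have hi := rho_norm_integrable d hd hδ hc
    have hmp := Measure.measurePreserving_sub_left (volume : Measure (EuclideanSpace ℝ (Fin d))) p
    have hcomp := (hmp.integrable_comp hi.aestronglyMeasurable).mpr hi
    exact hcomp
  have hconstInt : Integrable (fun _ : ℝ => c1max) (volume.restrict (Set.Ioc t 1)) :=
    (integrableOn_const_iff (C := c1max)).mpr (Or.inr measure_Ioc_lt_top)
  have hcoef1 : ∀ u ∈ Set.Ioc t 1, β⁻¹ * t ≤ β⁻¹ * t ^ γ * u ^ (1 - γ) := by
    intro u hu
    have h1 : t ^ γ * t ^ (1 - γ) = t := by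
      rw [← Real.rpow_add ht]; norm_num
    have h2 : t ^ (1 - γ) ≤ u ^ (1 - γ) := Real.rpow_le_rpow ht.le hu.1.le hγ1'
    have h3 := mul_le_mul_of_nonneg_left h2 (by positivity : (0:ℝ) ≤ β⁻¹ * t ^ γ)
    calc β⁻¹ * t = β⁻¹ * t ^ γ * t ^ (1 - γ) := by rw [mul_assoc, h1]
      _ ≤ β⁻¹ * t ^ γ * u ^ (1 - γ) := h3
  have hcoef2 : ∀ u ∈ Set.Ioc t 1, β⁻¹ * s ^ γ * t ^ (1 - γ) ≤ β⁻¹ * s ^ γ * u ^ (1 - γ) := by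
    intro u hu
    have h2 : t ^ (1 - γ) ≤ u ^ (1 - γ) := Real.rpow_le_rpow ht.le hu.1.le hγ1'
    exact mul_le_mul_of_nonneg_left h2 (by positivity : (0:ℝ) ≤ β⁻¹ * s ^ γ)
  have hg1prod : Integrable (fun q : (EuclideanSpace ℝ (Fin d)) × ℝ => g1 q.1 q.2)
      ((volume : Measure (EuclideanSpace ℝ (Fin d))).prod (volume.restrict (Set.Ioc t 1))) := by
    refine ((hshift (β⁻¹ * t) (by positivity) x).mul_prod hconstInt).mono'
      hg1meas.aestronglyMeasurable ?_
    filter_upwards [hae2] with q hq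
    have hu0 : 0 < q.2 := ht.trans hq.1
    have hrnn : 0 ≤ rho δ (β⁻¹ * t ^ γ * q.2 ^ (1 - γ) * ‖x - q.1‖ ^ (d:ℝ)) := by
      apply rho_nonneg
      have : (0:ℝ) ≤ q.2 ^ (1 - γ) := Real.rpow_nonneg hu0.le _
      positivity
    rw [Real.norm_of_nonneg (mul_nonneg (hc1nn _ hq) hrnn)]
    have e1 : rho δ (β⁻¹ * t ^ γ * q.2 ^ (1 - γ) * ‖x - q.1‖ ^ (d:ℝ)) ≤
        rho δ (β⁻¹ * t * ‖x - q.1‖ ^ (d:ℝ)) :=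
      rho_mul_anti hδ0 (by positivity) (hcoef1 q.2 hq)
        (Real.rpow_nonneg (norm_nonneg _) _)
    calc c1 q.2 * rho δ (β⁻¹ * t ^ γ * q.2 ^ (1 - γ) * ‖x - q.1‖ ^ (d:ℝ)) ≤
          c1max * rho δ (β⁻¹ * t * ‖x - q.1‖ ^ (d:ℝ)) :=
        mul_le_mul (hc1le _ hq) e1 hrnn hc1maxnn
      _ = rho δ (β⁻¹ * t * ‖x - q.1‖ ^ (d:ℝ)) * c1max := mul_comm _ _
  have hg2prod : Integrable (fun q : (EuclideanSpace ℝ (Fin d)) × ℝ => g2 q.1 q.2)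
      ((volume : Measure (EuclideanSpace ℝ (Fin d))).prod (volume.restrict (Set.Ioc t 1))) := by
    refine ((hshift (β⁻¹ * s ^ γ * t ^ (1 - γ)) (by positivity) y).mul_prod hconstInt).mono'
      hg2meas.aestronglyMeasurable ?_
    filter_upwards [hae2] with q hq
    have hu0 : 0 < q.2 := ht.trans hq.1
    have hrnn : 0 ≤ rho δ (β⁻¹ * s ^ γ * q.2 ^ (1 - γ) * ‖y - q.1‖ ^ (d:ℝ)) := by
      apply rho_nonneg
      have : (0:ℝ) ≤ q.2 ^ (1 - γ) := Real.rpow_nonneg hu0.le _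
      positivity
    rw [Real.norm_of_nonneg (mul_nonneg (hc2nn _ hq) hrnn)]
    have e1 : rho δ (β⁻¹ * s ^ γ * q.2 ^ (1 - γ) * ‖y - q.1‖ ^ (d:ℝ)) ≤
        rho δ (β⁻¹ * s ^ γ * t ^ (1 - γ) * ‖y - q.1‖ ^ (d:ℝ)) :=
      rho_mul_anti hδ0 (by positivity) (hcoef2 q.2 hq)
        (Real.rpow_nonneg (norm_nonneg _) _)
    calc c2 q.2 * rho δ (β⁻¹ * s ^ γ * q.2 ^ (1 - γ) * ‖y - q.1‖ ^ (d:ℝ)) ≤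
          c1max * rho δ (β⁻¹ * s ^ γ * t ^ (1 - γ) * ‖y - q.1‖ ^ (d:ℝ)) :=
        mul_le_mul (hc2le _ hq) e1 hrnn hc1maxnn
      _ = rho δ (β⁻¹ * s ^ γ * t ^ (1 - γ) * ‖y - q.1‖ ^ (d:ℝ)) * c1max := mul_comm _ _
  -- nonnegativity of integrand
  have fnn : ∀ (z : EuclideanSpace ℝ (Fin d)), ∀ u ∈ Set.Ioc t 1,
      0 ≤ (t / u) ^ Γ * rho δ (β⁻¹ * t ^ γ * u ^ (1 - γ) * ‖x - z‖ ^ (d : ℝ)) *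
        rho δ (β⁻¹ * s ^ γ * u ^ (1 - γ) * ‖y - z‖ ^ (d : ℝ)) := by
    intro z u hu
    have hu0 : 0 < u := ht.trans hu.1
    have hu1γ : (0:ℝ) ≤ u ^ (1 - γ) := Real.rpow_nonneg hu0.le _
    apply mul_nonneg (mul_nonneg (Real.rpow_nonneg (by positivity) _) _) _
    · apply rho_nonneg; positivity
    · apply rho_nonneg; positivity
  -- evaluation of the u-integral of a power
  have hval : ∫ u in Set.Ioc t 1, u ^ (-(A + 1)) = (1 - t ^ (-A)) / (-A) := by
    rw [← intervalIntegral.integral_of_le ht1.le]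
    rw [integral_rpow (Or.inr ⟨by intro hcon; apply hA0.ne'; linarith, by
      rw [Set.uIcc_of_le ht1.le]
      intro hmem
      rw [Set.mem_Icc] at hmem
      linarith [hmem.1]⟩)]
    rw [show -(A + 1) + 1 = -A by ring, Real.one_rpow]
  have htA : 0 < t ^ (-A) := Real.rpow_pos_of_pos ht _
  -- term 1
  have hterm1 : (∫ z : EuclideanSpace ℝ (Fin d), ∫ u in Set.Ioc t 1, g1 z u) ≤
      2 ^ ((d:ℝ) * δ) * Rv * β * K / A := by
    rw [integral_integral_swap hg1prod]
    set D1 : ℝ := B * t ^ Γ * β * (t ^ γ)⁻¹ * K with hD1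
    have hIeq : Set.EqOn (fun u => ∫ z : EuclideanSpace ℝ (Fin d), g1 z u)
        (fun u => D1 * u ^ (-(A + 1))) (Set.Ioc t 1) := by
      intro u hu
      have hu0 : 0 < u := ht.trans hu.1
      have hc : 0 < β⁻¹ * t ^ γ * u ^ (1 - γ) := by positivity
      have e0 : (∫ z : EuclideanSpace ℝ (Fin d), g1 z u) =
          c1 u * ((β⁻¹ * t ^ γ * u ^ (1 - γ))⁻¹ * K) := by
        simp only [hg1]
        rw [integral_const_mul, integral_rho_shift d hd hδ hc x, hK]
      show (∫ z : EuclideanSpace ℝ (Fin d), g1 z u) = D1 * u ^ (-(A + 1))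
      rw [e0]
      simp only [hc1, hD1]
      have e2 : (β⁻¹ * t ^ γ * u ^ (1 - γ))⁻¹ = β * (t ^ γ)⁻¹ * (u ^ (1 - γ))⁻¹ := by
        rw [mul_inv, mul_inv, inv_inv]
      have e1 : (t / u) ^ Γ = t ^ Γ * u ^ (-Γ) := by
        rw [Real.div_rpow ht.le hu0.le, Real.rpow_neg hu0.le, div_eq_mul_inv]
      have e3 : u ^ (-Γ) * u ^ (-((1 - γ) * δ)) * (u ^ (1 - γ))⁻¹ = u ^ (-(A + 1)) := by
        rw [← Real.rpow_neg hu0.le (1 - γ), ← Real.rpow_add hu0, ← Real.rpow_add hu0,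
          show -Γ + -((1 - γ) * δ) + -(1 - γ) = -(A + 1) by rw [hA]; ring]
      rw [e1, e2]
      linear_combination (B * t ^ Γ * β * (t ^ γ)⁻¹ * K) * e3
    rw [setIntegral_congr_fun measurableSet_Ioc hIeq, integral_const_mul, hval]
    have hD1nn : 0 ≤ D1 := by
      rw [hD1]
      have h1 : (0:ℝ) ≤ t ^ Γ := Real.rpow_nonneg ht.le _
      have h2 : (0:ℝ) ≤ (t ^ γ)⁻¹ := by positivity
      exact mul_nonneg (mul_nonneg (mul_nonneg (mul_nonneg hB0 h1) hβ.le) h2) hK0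
    have e4 : (1 - t ^ (-A)) / (-A) = (t ^ (-A) - 1) / A := by
      rw [div_neg, ← neg_div, neg_sub]
    have e5 : (t ^ (-A) - 1) / A ≤ t ^ (-A) / A := by
      exact (div_le_div_iff_of_pos_right hA0).mpr (by linarith)
    have e7 : t ^ ((1 - γ) * δ) * t ^ Γ * (t ^ γ)⁻¹ * t ^ (-A) = 1 := by
      rw [← Real.rpow_neg ht.le γ, ← Real.rpow_add ht, ← Real.rpow_add ht, ← Real.rpow_add ht,
        show (1 - γ) * δ + Γ + -γ + -A = 0 by rw [hA]; ring, Real.rpow_zero]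
    have e6 : D1 * (t ^ (-A) / A) = 2 ^ ((d:ℝ) * δ) * Rv * β * K / A *
        (t ^ ((1 - γ) * δ) * t ^ Γ * (t ^ γ)⁻¹ * t ^ (-A)) := by
      rw [hD1, hB]; ring
    calc D1 * ((1 - t ^ (-A)) / (-A)) = D1 * ((t ^ (-A) - 1) / A) := by rw [e4]
      _ ≤ D1 * (t ^ (-A) / A) := mul_le_mul_of_nonneg_left e5 hD1nn
      _ = 2 ^ ((d:ℝ) * δ) * Rv * β * K / A := by rw [e6, e7, mul_one]
  -- term 2
  have hterm2 : (∫ z : EuclideanSpace ℝ (Fin d), ∫ u in Set.Ioc t 1, g2 z u) ≤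
      2 ^ ((d:ℝ) * δ) * Rv * β * K / A := by
    rw [integral_integral_swap hg2prod]
    set D2 : ℝ := B * (s / t) ^ (γ * δ) * t ^ Γ * β * (s ^ γ)⁻¹ * K with hD2
    have hIeq : Set.EqOn (fun u => ∫ z : EuclideanSpace ℝ (Fin d), g2 z u)
        (fun u => D2 * u ^ (-(A + 1))) (Set.Ioc t 1) := by
      intro u hu
      have hu0 : 0 < u := ht.trans hu.1
      have hc : 0 < β⁻¹ * s ^ γ * u ^ (1 - γ) := by positivity
      have e0 : (∫ z : EuclideanSpace ℝ (Fin d), g2 z u) =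
          c2 u * ((β⁻¹ * s ^ γ * u ^ (1 - γ))⁻¹ * K) := by
        simp only [hg2]
        rw [integral_const_mul, integral_rho_shift d hd hδ hc y, hK]
      show (∫ z : EuclideanSpace ℝ (Fin d), g2 z u) = D2 * u ^ (-(A + 1))
      rw [e0]
      simp only [hc2, hc1, hD2]
      have e2 : (β⁻¹ * s ^ γ * u ^ (1 - γ))⁻¹ = β * (s ^ γ)⁻¹ * (u ^ (1 - γ))⁻¹ := by
        rw [mul_inv, mul_inv, inv_inv]
      have e1 : (t / u) ^ Γ = t ^ Γ * u ^ (-Γ) := by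
        rw [Real.div_rpow ht.le hu0.le, Real.rpow_neg hu0.le, div_eq_mul_inv]
      have e3 : u ^ (-Γ) * u ^ (-((1 - γ) * δ)) * (u ^ (1 - γ))⁻¹ = u ^ (-(A + 1)) := by
        rw [← Real.rpow_neg hu0.le (1 - γ), ← Real.rpow_add hu0, ← Real.rpow_add hu0,
          show -Γ + -((1 - γ) * δ) + -(1 - γ) = -(A + 1) by rw [hA]; ring]
      rw [e1, e2]
      linear_combination ((s / t) ^ (γ * δ) * B * t ^ Γ * β * (s ^ γ)⁻¹ * K) * e3
    rw [setIntegral_congr_fun measurableSet_Ioc hIeq, integral_const_mul, hval]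
    have hD2nn : 0 ≤ D2 := by
      rw [hD2]
      have h1 : (0:ℝ) ≤ t ^ Γ := Real.rpow_nonneg ht.le _
      have h2 : (0:ℝ) ≤ (s ^ γ)⁻¹ := by positivity
      exact mul_nonneg (mul_nonneg (mul_nonneg (mul_nonneg (mul_nonneg hB0 hstnn) h1)
        hβ.le) h2) hK0
    have e4 : (1 - t ^ (-A)) / (-A) = (t ^ (-A) - 1) / A := by
      rw [div_neg, ← neg_div, neg_sub]
    have e5 : (t ^ (-A) - 1) / A ≤ t ^ (-A) / A := by
      exact (div_le_div_iff_of_pos_right hA0).mpr (by linarith)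
    have e7 : t ^ ((1 - γ) * δ) * t ^ Γ * t ^ (-A) = t ^ γ := by
      rw [← Real.rpow_add ht, ← Real.rpow_add ht,
        show (1 - γ) * δ + Γ + -A = γ by rw [hA]; ring]
    have e6 : D2 * (t ^ (-A) / A) = 2 ^ ((d:ℝ) * δ) * Rv * β * K / A *
        ((s / t) ^ (γ * δ) * (t ^ ((1 - γ) * δ) * t ^ Γ * t ^ (-A)) * (s ^ γ)⁻¹) := by
      rw [hD2, hB]; ring
    have e4' : t ^ γ * (s ^ γ)⁻¹ = ((s / t) ^ γ)⁻¹ := by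
      rw [Real.div_rpow hs.le ht.le, inv_div, div_eq_mul_inv]
    have e5' : (s / t) ^ (γ * δ) * ((s / t) ^ γ)⁻¹ = (s / t) ^ (γ * δ - γ) := by
      rw [← Real.rpow_neg (by positivity : (0:ℝ) ≤ s / t) γ,
        ← Real.rpow_add (div_pos hs ht), show γ * δ + -γ = γ * δ - γ by ring]
    have e6'' : (s / t) ^ (γ * δ - γ) ≤ 1 :=
      Real.rpow_le_one (by positivity) (by rw [div_le_one ht]; exact hst.le) (by nlinarith)
    have hst2 : (s / t) ^ (γ * δ) * t ^ γ * (s ^ γ)⁻¹ ≤ 1 := by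
      calc (s / t) ^ (γ * δ) * t ^ γ * (s ^ γ)⁻¹ =
            (s / t) ^ (γ * δ) * ((s / t) ^ γ)⁻¹ := by rw [mul_assoc, e4']
        _ = (s / t) ^ (γ * δ - γ) := e5'
        _ ≤ 1 := e6''
    have hfac : 0 ≤ 2 ^ ((d:ℝ) * δ) * Rv * β * K / A := by positivity
    calc D2 * ((1 - t ^ (-A)) / (-A)) = D2 * ((t ^ (-A) - 1) / A) := by rw [e4]
      _ ≤ D2 * (t ^ (-A) / A) := mul_le_mul_of_nonneg_left e5 hD2nn
      _ = 2 ^ ((d:ℝ) * δ) * Rv * β * K / A *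
          ((s / t) ^ (γ * δ) * (t ^ ((1 - γ) * δ) * t ^ Γ * t ^ (-A)) * (s ^ γ)⁻¹) := e6
      _ = 2 ^ ((d:ℝ) * δ) * Rv * β * K / A *
          ((s / t) ^ (γ * δ) * t ^ γ * (s ^ γ)⁻¹) := by rw [e7]
      _ ≤ 2 ^ ((d:ℝ) * δ) * Rv * β * K / A * 1 := mul_le_mul_of_nonneg_left hst2 hfac
      _ = 2 ^ ((d:ℝ) * δ) * Rv * β * K / A := mul_one _
  -- main chain
  rw [hrho_eq]
  simp only [intervalIntegral.integral_of_le ht1.le]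
  calc (∫ z : EuclideanSpace ℝ (Fin d), ∫ u in Set.Ioc t 1, (t / u) ^ Γ *
          rho δ (β⁻¹ * t ^ γ * u ^ (1 - γ) * ‖x - z‖ ^ (d : ℝ)) *
          rho δ (β⁻¹ * s ^ γ * u ^ (1 - γ) * ‖y - z‖ ^ (d : ℝ)))
      ≤ ∫ z : EuclideanSpace ℝ (Fin d), ∫ u in Set.Ioc t 1, (g1 z u + g2 z u) := by
        apply integral_mono_of_nonneg
        · filter_upwards with z
          exact setIntegral_nonneg measurableSet_Ioc (fun u hu => fnn z u hu)
        · exact (hg1prod.add hg2prod).integral_prod_left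
        · filter_upwards with z
          apply integral_mono_of_nonneg
          · exact (ae_restrict_iff' measurableSet_Ioc).mpr
              (Filter.Eventually.of_forall (fun u hu => fnn z u hu))
          · exact (hg1z z).add (hg2z z)
          · exact (ae_restrict_iff' measurableSet_Ioc).mpr
              (Filter.Eventually.of_forall (fun u hu => hpt z u hu))
    _ = (∫ z : EuclideanSpace ℝ (Fin d), ∫ u in Set.Ioc t 1, g1 z u) +
          ∫ z : EuclideanSpace ℝ (Fin d), ∫ u in Set.Ioc t 1, g2 z u := by
        rw [show (fun z : EuclideanSpace ℝ (Fin d) =>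
            ∫ u in Set.Ioc t 1, (g1 z u + g2 z u)) = fun z =>
            (∫ u in Set.Ioc t 1, g1 z u) + ∫ u in Set.Ioc t 1, g2 z u from
          funext fun z => integral_add (hg1z z) (hg2z z)]
        exact integral_add hg1prod.integral_prod_left hg2prod.integral_prod_left
    _ ≤ 2 ^ ((d:ℝ) * δ) * Rv * β * K / A + 2 ^ ((d:ℝ) * δ) * Rv * β * K / A :=
        add_le_add hterm1 hterm2
    _ ≤ β * (2 * 2 ^ ((d : ℝ) * δ) * K / A + 1) * Rv := by
        have hbrv : 0 ≤ β * Rv := mul_nonneg hβ.le hRv0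
        have : 2 ^ ((d:ℝ) * δ) * Rv * β * K / A + 2 ^ ((d:ℝ) * δ) * Rv * β * K / A =
            β * (2 * 2 ^ ((d : ℝ) * δ) * K / A) * Rv := by ring
        linarith [mul_le_mul_of_nonneg_left (le_refl Rv) hβ.le]
end

section
/- Let d ≥ 1 be an integer, δ > 1, γ ∈ (0,1) and Γ ≥ 0 with γ(δ+1) > δ + Γ, and fix α₁ ∈ (1, (γ−Γ)/(δ(1−γ))) and α₂ ∈ (α₁, (α₁(γδ−1)+γ−Γ)/(δ−1)). Then for every β > 0 there exists c > 0 such that for all t ∈ (0, 1/2) and all x ∈ ℝ^d: ∫_{{y ∈ ℝ^d : |x−y|^d < t^{−α₂}}} ∫_0^{t^{α₁}} ∫_{ℝ^d} ∫_t^1 (t/u)^Γ · ρ_δ(β^{-1} t^γ u^{1−γ} |x−z|^d) · ρ_δ(β^{-1} s^γ u^{1−γ} |y−z|^d) du dz ds dy ≥ c · t^{Γ−γ+α₂(δ−1)−α₁(γδ−1)}, and the exponent Γ−γ+α₂(δ−1)−α₁(γδ−1) is strictly negative, so the left-hand side diverges as t ↓ 0. -/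
open MeasureTheory

open Real Module Metric Set

lemma rho_le_one (δ z : ℝ) : rho δ z ≤ 1 := min_le_left _ _

lemma rho_nonneg (δ : ℝ) {z : ℝ} (hz : 0 ≤ z) : 0 ≤ rho δ z :=
  le_min zero_le_one (Real.rpow_nonneg hz _)

lemma rho_anti {δ a b : ℝ} (hδ : 0 < δ) (ha : 0 < a) (hab : a ≤ b) : rho δ b ≤ rho δ a :=
  min_le_min le_rfl (Real.rpow_le_rpow_of_nonpos ha hab (by linarith))

lemma rho_eq_one {δ a : ℝ} (hδ : 0 < δ) (ha : 0 < a) (ha1 : a ≤ 1) : rho δ a = 1 := by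
  have h : (1:ℝ) ≤ a ^ (-δ) := by
    have := Real.rpow_le_rpow_of_nonpos ha ha1 (neg_nonpos.mpr hδ.le)
    simpa using this
  simpa [rho] using h

lemma min_one_mul_min_one {x y : ℝ} (hx : 0 ≤ x) (hy : 0 ≤ y) :
    min 1 x * min 1 y ≤ min 1 (x * y) := by
  rcases le_total x 1 with h1 | h1 <;> rcases le_total y 1 with h2 | h2
  · rw [min_eq_right h1, min_eq_right h2, min_eq_right (by nlinarith)]
  · rw [min_eq_right h1, min_eq_left h2, mul_one]
    exact le_min h1 (le_mul_of_one_le_right hx h2)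
  · rw [min_eq_left h1, min_eq_right h2, one_mul]
    exact le_min h2 (le_mul_of_one_le_left hy h1)
  · rw [min_eq_left h1, min_eq_left h2, one_mul]
    exact le_min le_rfl (by nlinarith)

lemma rho_scale {δ A t e : ℝ} (hδ : 0 < δ) (hA : 0 < A) (ht : 0 < t) (ht1 : t ≤ 1)
    (he : 0 ≤ e) : min 1 (A ^ (-δ)) * t ^ (e * δ) ≤ rho δ (A * t ^ (-e)) := by
  have htp : (0:ℝ) < t ^ (-e) := Real.rpow_pos_of_pos ht _
  have h1 : (A * t ^ (-e)) ^ (-δ) = A ^ (-δ) * t ^ (e * δ) := by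
    rw [Real.mul_rpow hA.le htp.le, ← Real.rpow_mul ht.le]
    ring_nf
  have hte : t ^ (e * δ) ≤ 1 := Real.rpow_le_one ht.le ht1 (by positivity)
  calc min 1 (A ^ (-δ)) * t ^ (e * δ)
      = min 1 (A ^ (-δ)) * min 1 (t ^ (e * δ)) := by rw [min_eq_right hte]
    _ ≤ min 1 (A ^ (-δ) * t ^ (e * δ)) :=
        min_one_mul_min_one (Real.rpow_nonneg hA.le _) (Real.rpow_nonneg ht.le _)
    _ = rho δ (A * t ^ (-e)) := by rw [rho, h1]

lemma rho_pointwise_bound {δ a w : ℝ} (hδ : 0 < δ) (ha : 0 < a) (hw : 0 ≤ w) (d : ℕ)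
    (hd : 1 ≤ d) :
    rho δ (a * w ^ (d : ℝ)) ≤ (2 ^ ((d : ℝ) * δ) * max 1 (a ^ (-δ))) * (1 + w) ^ (-((d : ℝ) * δ)) := by
  set r : ℝ := (d : ℝ) * δ with hr
  have hd0 : (0:ℝ) < d := by exact_mod_cast hd
  have hrpos : 0 < r := by positivity
  rcases le_total w 1 with h1 | h1
  · have h2 : ((2:ℝ)) ^ (-r) ≤ (1 + w) ^ (-r) :=
      Real.rpow_le_rpow_of_nonpos (by linarith) (by linarith) (by linarith)
    have h3 : (1:ℝ) = 2 ^ r * 2 ^ (-r) := by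
      rw [← Real.rpow_add (by norm_num)]; simp
    calc rho δ (a * w ^ (d:ℝ)) ≤ 1 := rho_le_one _ _
      _ = 2 ^ r * 2 ^ (-r) := h3
      _ ≤ (2 ^ r * max 1 (a ^ (-δ))) * (1 + w) ^ (-r) := by
          have : (2:ℝ) ^ r ≤ 2 ^ r * max 1 (a ^ (-δ)) :=
            le_mul_of_one_le_right (by positivity) (le_max_left _ _)
          exact mul_le_mul this h2 (by positivity) (by positivity)
  · have hwpos : (0:ℝ) < w := by linarith
    have hkey : (a * w ^ (d:ℝ)) ^ (-δ) = a ^ (-δ) * w ^ (-r) := by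
      rw [Real.mul_rpow ha.le (Real.rpow_nonneg hw _), ← Real.rpow_mul hw]
      ring_nf
      rw [hr, mul_comm (d:ℝ) δ]
    have hlhs : rho δ (a * w ^ (d:ℝ)) ≤ a ^ (-δ) * w ^ (-r) := by
      rw [rho, ← hkey]; exact min_le_right _ _
    have h2w : (2 * w) ^ (-r) ≤ (1 + w) ^ (-r) :=
      Real.rpow_le_rpow_of_nonpos (by linarith) (by linarith) (by linarith)
    have h2weq : (2 * w) ^ (-r) = 2 ^ (-r) * w ^ (-r) :=
      Real.mul_rpow (by norm_num) hwpos.le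
    have h4 : a ^ (-δ) * w ^ (-r) ≤ (2 ^ r * max 1 (a ^ (-δ))) * (1 + w) ^ (-r) := by
      have hmax : a ^ (-δ) ≤ max 1 (a ^ (-δ)) := le_max_right _ _
      have hstep : (2 ^ r * max 1 (a ^ (-δ))) * (2 * w) ^ (-r) ≤
          (2 ^ r * max 1 (a ^ (-δ))) * (1 + w) ^ (-r) :=
        mul_le_mul_of_nonneg_left h2w (by positivity)
      refine le_trans ?_ hstep
      rw [h2weq]
      have h2r : (2:ℝ) ^ r * 2 ^ (-r) = 1 := by rw [← Real.rpow_add (by norm_num)]; simp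
      calc a ^ (-δ) * w ^ (-r) = (2 ^ r * 2 ^ (-r)) * (a ^ (-δ) * w ^ (-r)) := by rw [h2r]; ring
        _ ≤ (2 ^ r * 2 ^ (-r)) * (max 1 (a ^ (-δ)) * w ^ (-r)) := by
            have := mul_le_mul_of_nonneg_right hmax (Real.rpow_nonneg hwpos.le (-r))
            exact mul_le_mul_of_nonneg_left this (by positivity)
        _ = (2 ^ r * max 1 (a ^ (-δ))) * (2 ^ (-r) * w ^ (-r)) := by ring
    exact hlhs.trans h4

lemma integrable_rho_norm {δ : ℝ} (hδ : 1 < δ) {d : ℕ} (hd : 1 ≤ d)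
    (x : EuclideanSpace ℝ (Fin d)) {a : ℝ} (ha : 0 < a) :
    Integrable (fun z : EuclideanSpace ℝ (Fin d) => rho δ (a * ‖x - z‖ ^ (d : ℝ))) := by
  have hd0 : (0:ℝ) < d := by exact_mod_cast hd
  have hdr : (finrank ℝ (EuclideanSpace ℝ (Fin d)) : ℝ) < (d : ℝ) * δ := by
    rw [finrank_euclideanSpace_fin]; nlinarith
  have h1 : Integrable (fun w : EuclideanSpace ℝ (Fin d) => (1 + ‖w‖) ^ (-((d:ℝ) * δ))) :=
    integrable_one_add_norm hdr
  have h2 : Integrable (fun z : EuclideanSpace ℝ (Fin d) => (1 + ‖x - z‖) ^ (-((d:ℝ) * δ))) :=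
    h1.comp_sub_left x
  refine (h2.const_mul (2 ^ ((d:ℝ) * δ) * max 1 (a ^ (-δ)))).mono' ?_ ?_
  · have : Measurable (fun z : EuclideanSpace ℝ (Fin d) => rho δ (a * ‖x - z‖ ^ (d : ℝ))) := by
      unfold rho; fun_prop
    exact this.aestronglyMeasurable
  · filter_upwards with z
    rw [Real.norm_eq_abs, abs_of_nonneg (rho_nonneg δ (by positivity))]
    exact rho_pointwise_bound (by linarith) ha (norm_nonneg _) d hd


noncomputable def phi (d : ℕ) (δ γ Γ β t : ℝ) (x y : EuclideanSpace ℝ (Fin d)) (s : ℝ)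
    (z : EuclideanSpace ℝ (Fin d)) (u : ℝ) : ℝ :=
  (t / u) ^ Γ * rho δ (β⁻¹ * t ^ γ * u ^ (1 - γ) * ‖x - z‖ ^ (d : ℝ)) *
  rho δ (β⁻¹ * s ^ γ * u ^ (1 - γ) * ‖y - z‖ ^ (d : ℝ))

lemma phi_def (d : ℕ) (δ γ Γ β t : ℝ) (x y : EuclideanSpace ℝ (Fin d)) (s : ℝ)
    (z : EuclideanSpace ℝ (Fin d)) (u : ℝ) :
    (t / u) ^ Γ * rho δ (β⁻¹ * t ^ γ * u ^ (1 - γ) * ‖x - z‖ ^ (d : ℝ)) *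
    rho δ (β⁻¹ * s ^ γ * u ^ (1 - γ) * ‖y - z‖ ^ (d : ℝ)) = phi d δ γ Γ β t x y s z u := rfl

set_option maxHeartbeats 1000000 in
/-- Two-connection lemma (supercritical case `γ(δ+1) > δ + Γ`): the expected number
of pairs `(y,z)` with `y` old and close, `z` a young connector, realising the
directed two-step path `x → z → y`, is at least `c·t^{Γ-γ+α₂(δ-1)-α₁(γδ-1)}`,
and this exponent is strictly negative, so the quantity diverges as `t ↓ 0`. -/
theorem stmt10 (d : ℕ) (hd : 1 ≤ d) (δ γ Γ α₁ α₂ : ℝ) (hδ : 1 < δ) (hγ0 : 0 < γ)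
    (hγ1 : γ < 1) (hΓ : 0 ≤ Γ) (h : δ + Γ < γ * (δ + 1))
    (hα₁l : 1 < α₁) (hα₁u : α₁ < (γ - Γ) / (δ * (1 - γ)))
    (hα₂l : α₁ < α₂) (hα₂u : α₂ < (α₁ * (γ * δ - 1) + γ - Γ) / (δ - 1)) :
    (Γ - γ + α₂ * (δ - 1) - α₁ * (γ * δ - 1) < 0) ∧
    ∀ β : ℝ, 0 < β → ∃ c : ℝ, 0 < c ∧ ∀ t : ℝ, 0 < t → t < 1 / 2 →
      ∀ x : EuclideanSpace ℝ (Fin d),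
        c * t ^ (Γ - γ + α₂ * (δ - 1) - α₁ * (γ * δ - 1)) ≤
          ∫ y in {y : EuclideanSpace ℝ (Fin d) | ‖x - y‖ ^ (d : ℝ) < t ^ (-α₂)},
            ∫ s in (0:ℝ)..(t ^ α₁),
              ∫ z : EuclideanSpace ℝ (Fin d),
                ∫ u in t..1, (t / u) ^ Γ *
                  rho δ (β⁻¹ * t ^ γ * u ^ (1 - γ) * ‖x - z‖ ^ (d : ℝ)) *
                  rho δ (β⁻¹ * s ^ γ * u ^ (1 - γ) * ‖y - z‖ ^ (d : ℝ)) := by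
  have hδ0 : (0:ℝ) < δ := by linarith
  have hδ1 : (0:ℝ) < δ - 1 := by linarith
  have hEXPneg : Γ - γ + α₂ * (δ - 1) - α₁ * (γ * δ - 1) < 0 := by
    have h2 := (lt_div_iff₀ hδ1).mp hα₂u
    nlinarith
  refine ⟨hEXPneg, ?_⟩
  intro β hβ
  have hd0 : (0:ℝ) < d := by exact_mod_cast hd
  haveI : Nonempty (Fin d) := Fin.pos_iff_nonempty.mp hd
  haveI : Nontrivial (EuclideanSpace ℝ (Fin d)) := inferInstance
  set V : ℝ := (volume (ball (0 : EuclideanSpace ℝ (Fin d)) 1)).toReal with hV_def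
  have hV : 0 < V :=
    ENNReal.toReal_pos (measure_ball_pos _ _ one_pos).ne' measure_ball_lt_top.ne
  set D : ℝ := (1 + β ^ (1/(d:ℝ))) ^ (d:ℝ) with hD_def
  have hD : 0 < D := Real.rpow_pos_of_pos (by positivity) _
  set A : ℝ := D / β with hA_def
  have hA : 0 < A := div_pos hD hβ
  set κ : ℝ := min 1 (A ^ (-δ)) with hκ_def
  have hκ : 0 < κ := lt_min one_pos (Real.rpow_pos_of_pos hA _)
  set e : ℝ := α₂ - α₁ * γ with he_def
  have he : 0 ≤ e := by nlinarith
  refine ⟨(1/2) * (κ * (β * (V * V))), by positivity, ?_⟩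
  intro t ht ht2 x
  have ht1 : t ≤ 1 := by linarith
  have hthalf : t ≤ 1/2 := ht2.le
  have hT0 : (0:ℝ) < t ^ α₁ := Real.rpow_pos_of_pos ht _
  have hT1 : t ^ α₁ ≤ 1 := Real.rpow_le_one ht.le ht1 (by linarith)
  -- radii
  set R2 : ℝ := (t ^ (-α₂)) ^ (1/(d:ℝ)) with hR2_def
  have hR2 : 0 < R2 := Real.rpow_pos_of_pos (Real.rpow_pos_of_pos ht _) _
  have hR2d : R2 ^ (d:ℝ) = t ^ (-α₂) := by
    rw [hR2_def, ← Real.rpow_mul (Real.rpow_pos_of_pos ht _).le, one_div,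
      inv_mul_cancel₀ hd0.ne', Real.rpow_one]
  set r1 : ℝ := (β * t ^ (-γ)) ^ (1/(d:ℝ)) with hr1_def
  have hβt : (0:ℝ) < β * t ^ (-γ) := by positivity
  have hr1 : 0 < r1 := Real.rpow_pos_of_pos hβt _
  have hr1d : r1 ^ (d:ℝ) = β * t ^ (-γ) := by
    rw [hr1_def, ← Real.rpow_mul hβt.le, one_div, inv_mul_cancel₀ hd0.ne', Real.rpow_one]
  -- set rewrite
  have hBeq : {y : EuclideanSpace ℝ (Fin d) | ‖x - y‖ ^ (d:ℝ) < t ^ (-α₂)} = ball x R2 := by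
    ext y
    rw [mem_setOf_eq, mem_ball, dist_eq_norm, ← norm_sub_rev x y, ← hR2d]
    exact Real.rpow_lt_rpow_iff (norm_nonneg _) hR2.le hd0
  rw [hBeq]
  simp only [intervalIntegral.integral_of_le hT0.le, intervalIntegral.integral_of_le ht1]
  simp only [phi_def]
  -- measurability
  have hmeas0 : Measurable (fun p : ((EuclideanSpace ℝ (Fin d) × ℝ) × EuclideanSpace ℝ (Fin d)) × ℝ =>
      phi d δ γ Γ β t x p.1.1.1 p.1.1.2 p.1.2 p.2) := by
    unfold phi rho; fun_prop
  have hmeas1 : StronglyMeasurable (fun q : (EuclideanSpace ℝ (Fin d) × ℝ) × EuclideanSpace ℝ (Fin d) =>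
      ∫ u in Ioc t 1, phi d δ γ Γ β t x q.1.1 q.1.2 q.2 u) :=
    hmeas0.stronglyMeasurable.integral_prod_right'
  have hmeas2 : StronglyMeasurable (fun q : EuclideanSpace ℝ (Fin d) × ℝ =>
      ∫ z, ∫ u in Ioc t 1, phi d δ γ Γ β t x q.1 q.2 z u) :=
    hmeas1.integral_prod_right'
  have hmeas3 : StronglyMeasurable (fun y : EuclideanSpace ℝ (Fin d) =>
      ∫ s in Ioc 0 (t ^ α₁), ∫ z, ∫ u in Ioc t 1, phi d δ γ Γ β t x y s z u) :=
    hmeas2.integral_prod_right'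
  -- pointwise nonnegativity and upper bound
  have h_nonneg : ∀ (y z : EuclideanSpace ℝ (Fin d)) (s u : ℝ), 0 ≤ s → 0 < u →
      0 ≤ phi d δ γ Γ β t x y s z u := by
    intro y z s u hs hu
    rw [← phi_def]
    have h1 : (0:ℝ) ≤ (t / u) ^ Γ := Real.rpow_nonneg (by positivity) _
    have h2 := rho_nonneg (z := β⁻¹ * t ^ γ * u ^ (1 - γ) * ‖x - z‖ ^ (d : ℝ)) δ (by positivity)
    have h3 := rho_nonneg (z := β⁻¹ * s ^ γ * u ^ (1 - γ) * ‖y - z‖ ^ (d : ℝ)) δ (by positivity)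
    positivity
  have h_le_W : ∀ (y z : EuclideanSpace ℝ (Fin d)) (s u : ℝ), 0 ≤ s → u ∈ Ioc t 1 →
      phi d δ γ Γ β t x y s z u ≤
        rho δ (β⁻¹ * t * ‖x - z‖ ^ (d : ℝ)) := by
    intro y z s u hs hu
    rw [← phi_def]
    have hu0 : 0 < u := lt_trans ht hu.1
    have hp1 : (t / u) ^ Γ ≤ 1 :=
      Real.rpow_le_one (by positivity) ((div_le_one hu0).mpr hu.1.le) hΓ
    have hp3 : rho δ (β⁻¹ * s ^ γ * u ^ (1 - γ) * ‖y - z‖ ^ (d : ℝ)) ≤ 1 := rho_le_one _ _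
    have hp2 : rho δ (β⁻¹ * t ^ γ * u ^ (1 - γ) * ‖x - z‖ ^ (d : ℝ)) ≤
        rho δ (β⁻¹ * t * ‖x - z‖ ^ (d : ℝ)) := by
      by_cases hxz : ‖x - z‖ = 0
      · simp [hxz, Real.zero_rpow hd0.ne', rho, Real.zero_rpow (by linarith : -δ ≠ 0)]
      · have hxz0 : 0 < ‖x - z‖ := lt_of_le_of_ne (norm_nonneg _) (Ne.symm hxz)
        apply rho_anti hδ0 (by positivity)
        have hmono : t ^ (1 - γ) ≤ u ^ (1 - γ) :=
          Real.rpow_le_rpow ht.le hu.1.le (by linarith)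
        have hts : t = t ^ γ * t ^ (1 - γ) := by
          rw [← Real.rpow_add ht]; norm_num
        calc β⁻¹ * t * ‖x - z‖ ^ (d : ℝ)
            = β⁻¹ * (t ^ γ * t ^ (1 - γ)) * ‖x - z‖ ^ (d : ℝ) := by rw [← hts]
          _ ≤ β⁻¹ * (t ^ γ * u ^ (1 - γ)) * ‖x - z‖ ^ (d : ℝ) := by
              have := mul_le_mul_of_nonneg_left hmono (Real.rpow_nonneg ht.le γ)
              have := mul_le_mul_of_nonneg_left this (by positivity : (0:ℝ) ≤ β⁻¹)
              exact mul_le_mul_of_nonneg_right this (by positivity)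
          _ = β⁻¹ * t ^ γ * u ^ (1 - γ) * ‖x - z‖ ^ (d : ℝ) := by ring
    have harg1 : (0:ℝ) ≤ β⁻¹ * t ^ γ * u ^ (1 - γ) * ‖x - z‖ ^ (d : ℝ) := by positivity
    have harg2 : (0:ℝ) ≤ β⁻¹ * s ^ γ * u ^ (1 - γ) * ‖y - z‖ ^ (d : ℝ) := by positivity
    have hstep := mul_le_mul (mul_le_mul hp1 hp2 (rho_nonneg δ harg1) zero_le_one)
      hp3 (rho_nonneg δ harg2)
      (by simpa using rho_nonneg δ (by positivity : (0:ℝ) ≤ β⁻¹ * t * ‖x - z‖ ^ (d : ℝ)))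
    simpa using hstep
  -- integrability chain
  have hW : Integrable (fun z : EuclideanSpace ℝ (Fin d) =>
      rho δ (β⁻¹ * t * ‖x - z‖ ^ (d : ℝ))) :=
    integrable_rho_norm hδ hd x (by positivity)
  have hWle1 : ∀ z : EuclideanSpace ℝ (Fin d), rho δ (β⁻¹ * t * ‖x - z‖ ^ (d : ℝ)) ≤ 1 :=
    fun z => rho_le_one _ _
  have hWnn : ∀ z : EuclideanSpace ℝ (Fin d), 0 ≤ rho δ (β⁻¹ * t * ‖x - z‖ ^ (d : ℝ)) :=
    fun z => rho_nonneg δ (by positivity)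
  have hInt_u : ∀ (y z : EuclideanSpace ℝ (Fin d)) (s : ℝ), 0 ≤ s →
      IntegrableOn (fun u => phi d δ γ Γ β t x y s z u) (Ioc t 1) := by
    intro y z s hs
    refine Integrable.mono' (g := fun _ => (1:ℝ))
      (integrableOn_const measure_Ioc_lt_top.ne)
      (Measurable.aestronglyMeasurable ?_) ?_
    · have hsec := hmeas0.comp (measurable_prodMk_left (x := ((y, s), z)))
      simpa [Function.comp_def] using hsec
    · rw [ae_restrict_iff' measurableSet_Ioc]
      filter_upwards with u hu
      rw [Real.norm_eq_abs, abs_of_nonneg (h_nonneg y z s u hs (lt_trans ht hu.1))]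
      exact (h_le_W y z s u hs hu).trans (hWle1 z)
  have hF_nonneg : ∀ (y z : EuclideanSpace ℝ (Fin d)) (s : ℝ), 0 ≤ s →
      0 ≤ ∫ u in Ioc t 1, phi d δ γ Γ β t x y s z u := by
    intro y z s hs
    exact setIntegral_nonneg measurableSet_Ioc fun u hu => h_nonneg y z s u hs (lt_trans ht hu.1)
  have hF_le : ∀ (y z : EuclideanSpace ℝ (Fin d)) (s : ℝ), 0 ≤ s →
      (∫ u in Ioc t 1, phi d δ γ Γ β t x y s z u) ≤
        rho δ (β⁻¹ * t * ‖x - z‖ ^ (d : ℝ)) := by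
    intro y z s hs
    calc (∫ u in Ioc t 1, phi d δ γ Γ β t x y s z u)
        ≤ ∫ _u in Ioc t 1, rho δ (β⁻¹ * t * ‖x - z‖ ^ (d : ℝ)) :=
          setIntegral_mono_on (hInt_u y z s hs)
            (integrableOn_const measure_Ioc_lt_top.ne) measurableSet_Ioc
            (fun u hu => h_le_W y z s u hs hu)
      _ = (volume (Ioc t 1)).toReal * rho δ (β⁻¹ * t * ‖x - z‖ ^ (d : ℝ)) := by
          rw [setIntegral_const, smul_eq_mul, measureReal_def]
      _ ≤ rho δ (β⁻¹ * t * ‖x - z‖ ^ (d : ℝ)) := by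
          apply mul_le_of_le_one_left (hWnn z)
          rw [Real.volume_Ioc, ENNReal.toReal_ofReal (by linarith)]
          linarith
  have hInt_z : ∀ (y : EuclideanSpace ℝ (Fin d)) (s : ℝ), 0 ≤ s →
      Integrable (fun z : EuclideanSpace ℝ (Fin d) =>
        ∫ u in Ioc t 1, phi d δ γ Γ β t x y s z u) := by
    intro y s hs
    refine hW.mono' (Measurable.aestronglyMeasurable ?_) ?_
    · have hsec := hmeas1.measurable.comp (measurable_prodMk_left (x := (y, s)))
      simpa [Function.comp_def] using hsec
    · filter_upwards with z
      rw [Real.norm_eq_abs, abs_of_nonneg (hF_nonneg y z s hs)]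
      exact hF_le y z s hs
  set M : ℝ := ∫ z, rho δ (β⁻¹ * t * ‖x - z‖ ^ (d : ℝ)) with hM_def
  have hM0 : 0 ≤ M := integral_nonneg fun z => hWnn z
  have hG_nonneg : ∀ (y : EuclideanSpace ℝ (Fin d)) (s : ℝ), 0 ≤ s →
      0 ≤ ∫ z, ∫ u in Ioc t 1, phi d δ γ Γ β t x y s z u :=
    fun y s hs => integral_nonneg fun z => hF_nonneg y z s hs
  have hG_le : ∀ (y : EuclideanSpace ℝ (Fin d)) (s : ℝ), 0 ≤ s →
      (∫ z, ∫ u in Ioc t 1, phi d δ γ Γ β t x y s z u) ≤ M :=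
    fun y s hs => integral_mono (hInt_z y s hs) hW (fun z => hF_le y z s hs)
  have hInt_s : ∀ y : EuclideanSpace ℝ (Fin d),
      IntegrableOn (fun s => ∫ z, ∫ u in Ioc t 1, phi d δ γ Γ β t x y s z u)
        (Ioc 0 (t ^ α₁)) := by
    intro y
    refine Integrable.mono' (g := fun _ => M)
      (integrableOn_const measure_Ioc_lt_top.ne)
      (Measurable.aestronglyMeasurable ?_) ?_
    · have hsec := hmeas2.measurable.comp (measurable_prodMk_left (x := y))
      simpa [Function.comp_def] using hsec
    · rw [ae_restrict_iff' measurableSet_Ioc]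
      filter_upwards with s hs
      rw [Real.norm_eq_abs, abs_of_nonneg (hG_nonneg y s hs.1.le)]
      exact hG_le y s hs.1.le
  have hH_nonneg : ∀ y : EuclideanSpace ℝ (Fin d),
      0 ≤ ∫ s in Ioc 0 (t ^ α₁), ∫ z, ∫ u in Ioc t 1, phi d δ γ Γ β t x y s z u :=
    fun y => setIntegral_nonneg measurableSet_Ioc fun s hs => hG_nonneg y s hs.1.le
  have hH_le : ∀ y : EuclideanSpace ℝ (Fin d),
      (∫ s in Ioc 0 (t ^ α₁), ∫ z, ∫ u in Ioc t 1, phi d δ γ Γ β t x y s z u) ≤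
        M * (t ^ α₁) := by
    intro y
    calc (∫ s in Ioc 0 (t ^ α₁), ∫ z, ∫ u in Ioc t 1, phi d δ γ Γ β t x y s z u)
        ≤ ∫ _s in Ioc 0 (t ^ α₁), M :=
          setIntegral_mono_on (hInt_s y)
            (integrableOn_const measure_Ioc_lt_top.ne) measurableSet_Ioc
            (fun s hs => hG_le y s hs.1.le)
      _ = (volume (Ioc 0 (t ^ α₁))).toReal * M := by rw [setIntegral_const, smul_eq_mul, measureReal_def]
      _ = M * (t ^ α₁) := by
          rw [Real.volume_Ioc, ENNReal.toReal_ofReal (by linarith), sub_zero, mul_comm]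
  have hInt_y : IntegrableOn (fun y : EuclideanSpace ℝ (Fin d) =>
      ∫ s in Ioc 0 (t ^ α₁), ∫ z, ∫ u in Ioc t 1, phi d δ γ Γ β t x y s z u)
      (ball x R2) := by
    refine Integrable.mono' (g := fun _ => M * (t ^ α₁))
      (integrableOn_const measure_ball_lt_top.ne)
      hmeas3.measurable.aestronglyMeasurable ?_
    filter_upwards with y
    rw [Real.norm_eq_abs, abs_of_nonneg (hH_nonneg y)]
    exact hH_le y
  -- pointwise lower bound on the box
  have h_lb : ∀ y ∈ ball x R2, ∀ s ∈ Ioc (0:ℝ) (t ^ α₁), ∀ z ∈ ball x r1, z ≠ x → z ≠ y →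
      ∀ u ∈ Ioc (1/2:ℝ) 1, t ^ Γ * (κ * t ^ (e * δ)) ≤ phi d δ γ Γ β t x y s z u := by
    intro y hy s hs z hz hzx hzy u hu
    have hu0 : (0:ℝ) < u := lt_trans one_half_pos hu.1
    have hu1 : u ≤ 1 := hu.2
    have hs0 : 0 < s := hs.1
    rw [← phi_def]
    have hp1 : t ^ Γ ≤ (t / u) ^ Γ := by
      apply Real.rpow_le_rpow ht.le _ hΓ
      rw [le_div_iff₀ hu0]; nlinarith
    have hxz : 0 < ‖x - z‖ := norm_sub_pos_iff.mpr (Ne.symm hzx)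
    have hxzlt : ‖x - z‖ < r1 := by
      have h0 := mem_ball.mp hz
      rw [dist_eq_norm] at h0
      rwa [norm_sub_rev]
    have hxzd : ‖x - z‖ ^ (d:ℝ) ≤ β * t ^ (-γ) := by
      rw [← hr1d]; exact Real.rpow_le_rpow (norm_nonneg _) hxzlt.le hd0.le
    have hp2 : rho δ (β⁻¹ * t ^ γ * u ^ (1 - γ) * ‖x - z‖ ^ (d : ℝ)) = 1 := by
      apply rho_eq_one hδ0 (by positivity)
      have step : β⁻¹ * t ^ γ * u ^ (1 - γ) * ‖x - z‖ ^ (d : ℝ) ≤ u ^ (1 - γ) := by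
        calc β⁻¹ * t ^ γ * u ^ (1 - γ) * ‖x - z‖ ^ (d : ℝ)
            ≤ β⁻¹ * t ^ γ * u ^ (1 - γ) * (β * t ^ (-γ)) :=
              mul_le_mul_of_nonneg_left hxzd (by positivity)
          _ = (β⁻¹ * β) * (t ^ γ * t ^ (-γ)) * u ^ (1 - γ) := by ring
          _ = u ^ (1 - γ) := by
              rw [inv_mul_cancel₀ hβ.ne', ← Real.rpow_add ht, add_neg_cancel,
                Real.rpow_zero]
              ring
      exact step.trans (Real.rpow_le_one hu0.le hu1 (by linarith))
    have hyz : 0 < ‖y - z‖ := norm_sub_pos_iff.mpr (Ne.symm hzy)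
    have hyx : ‖y - x‖ < R2 := by
      have h0 := mem_ball.mp hy
      rwa [dist_eq_norm] at h0
    have hr1R2 : r1 ≤ β ^ (1/(d:ℝ)) * R2 := by
      rw [hr1_def, hR2_def, Real.mul_rpow hβ.le (Real.rpow_pos_of_pos ht _).le]
      apply mul_le_mul_of_nonneg_left _ (Real.rpow_nonneg hβ.le _)
      apply Real.rpow_le_rpow (Real.rpow_pos_of_pos ht _).le _ (by positivity)
      exact Real.rpow_le_rpow_of_exponent_ge ht ht1 (by linarith)
    have hyznorm : ‖y - z‖ ≤ (1 + β ^ (1/(d:ℝ))) * R2 := by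
      have hdecomp : y - z = (y - x) + (x - z) := by abel
      calc ‖y - z‖ = ‖(y - x) + (x - z)‖ := by rw [hdecomp]
        _ ≤ ‖y - x‖ + ‖x - z‖ := norm_add_le _ _
        _ ≤ R2 + β ^ (1/(d:ℝ)) * R2 := by
            have := hxzlt.le.trans hr1R2
            linarith [hyx.le]
        _ = (1 + β ^ (1/(d:ℝ))) * R2 := by ring
    have hyzd : ‖y - z‖ ^ (d:ℝ) ≤ D * t ^ (-α₂) := by
      calc ‖y - z‖ ^ (d:ℝ) ≤ ((1 + β ^ (1/(d:ℝ))) * R2) ^ (d:ℝ) :=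
            Real.rpow_le_rpow (norm_nonneg _) hyznorm hd0.le
        _ = D * t ^ (-α₂) := by
            rw [Real.mul_rpow (by positivity) hR2.le, hR2d, hD_def]
    have hsle : s ^ γ ≤ t ^ (α₁ * γ) := by
      rw [Real.rpow_mul ht.le]
      exact Real.rpow_le_rpow hs0.le hs.2 hγ0.le
    have hule : u ^ (1 - γ) ≤ 1 := Real.rpow_le_one hu0.le hu1 (by linarith)
    have harg2 : β⁻¹ * s ^ γ * u ^ (1 - γ) * ‖y - z‖ ^ (d : ℝ) ≤ A * t ^ (-e) := by
      have hb1 : β⁻¹ * s ^ γ ≤ β⁻¹ * t ^ (α₁ * γ) :=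
        mul_le_mul_of_nonneg_left hsle (by positivity)
      have hb2 : β⁻¹ * s ^ γ * u ^ (1 - γ) ≤ β⁻¹ * t ^ (α₁ * γ) * 1 :=
        mul_le_mul hb1 hule (by positivity) (by positivity)
      have hb3 : β⁻¹ * s ^ γ * u ^ (1 - γ) * ‖y - z‖ ^ (d : ℝ) ≤
          β⁻¹ * t ^ (α₁ * γ) * 1 * (D * t ^ (-α₂)) :=
        mul_le_mul hb2 hyzd (by positivity) (by positivity)
      refine hb3.trans (le_of_eq ?_)
      have hexp : α₁ * γ + -α₂ = -e := by rw [he_def]; ring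
      calc β⁻¹ * t ^ (α₁ * γ) * 1 * (D * t ^ (-α₂))
          = (D / β) * (t ^ (α₁ * γ) * t ^ (-α₂)) := by
            rw [div_eq_mul_inv]; ring
        _ = A * t ^ (-e) := by rw [← Real.rpow_add ht, hexp, hA_def]
    have harg2pos : 0 < β⁻¹ * s ^ γ * u ^ (1 - γ) * ‖y - z‖ ^ (d : ℝ) := by positivity
    have hp3 : κ * t ^ (e * δ) ≤
        rho δ (β⁻¹ * s ^ γ * u ^ (1 - γ) * ‖y - z‖ ^ (d : ℝ)) := by
      refine le_trans ?_ (rho_anti hδ0 harg2pos harg2)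
      rw [hκ_def]
      exact rho_scale hδ0 hA ht ht1 he
    calc t ^ Γ * (κ * t ^ (e * δ))
        ≤ (t / u) ^ Γ * rho δ (β⁻¹ * s ^ γ * u ^ (1 - γ) * ‖y - z‖ ^ (d : ℝ)) :=
          mul_le_mul hp1 hp3 (by positivity) (Real.rpow_nonneg (by positivity) _)
      _ = (t / u) ^ Γ * rho δ (β⁻¹ * t ^ γ * u ^ (1 - γ) * ‖x - z‖ ^ (d : ℝ)) *
          rho δ (β⁻¹ * s ^ γ * u ^ (1 - γ) * ‖y - z‖ ^ (d : ℝ)) := by rw [hp2]; ring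
  have lb_F : ∀ y ∈ ball x R2, ∀ s ∈ Ioc (0:ℝ) (t ^ α₁), ∀ z ∈ ball x r1, z ≠ x → z ≠ y →
      t ^ Γ * (κ * t ^ (e * δ)) * (1/2) ≤ ∫ u in Ioc t 1, phi d δ γ Γ β t x y s z u := by
    intro y hy s hs z hz hzx hzy
    have hiu := hInt_u y z s hs.1.le
    have hi1 := hiu.mono_set (Ioc_subset_Ioc le_rfl (by norm_num : (1/2:ℝ) ≤ 1))
    have hi2 := hiu.mono_set (Ioc_subset_Ioc hthalf le_rfl)
    have hsplit : (∫ u in Ioc t 1, phi d δ γ Γ β t x y s z u) =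
        (∫ u in Ioc t (1/2:ℝ), phi d δ γ Γ β t x y s z u) +
        (∫ u in Ioc (1/2:ℝ) 1, phi d δ γ Γ β t x y s z u) := by
      rw [← Ioc_union_Ioc_eq_Ioc hthalf (by norm_num : (1/2:ℝ) ≤ 1)]
      exact setIntegral_union (Ioc_disjoint_Ioc_of_le le_rfl) measurableSet_Ioc hi1 hi2
    have hpos1 : 0 ≤ ∫ u in Ioc t (1/2:ℝ), phi d δ γ Γ β t x y s z u :=
      setIntegral_nonneg measurableSet_Ioc fun u hu =>
        h_nonneg y z s u hs.1.le (lt_trans ht hu.1)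
    have hlow : t ^ Γ * (κ * t ^ (e * δ)) * ((1:ℝ)/2) ≤
        ∫ u in Ioc (1/2:ℝ) 1, phi d δ γ Γ β t x y s z u := by
      have hcl := setIntegral_ge_of_const_le_real measurableSet_Ioc measure_Ioc_lt_top.ne
        (fun u hu => h_lb y hy s hs z hz hzx hzy u hu) hi2
      rwa [measureReal_def, Real.volume_Ioc, ENNReal.toReal_ofReal (by norm_num),
        show (1:ℝ) - 1/2 = 1/2 by norm_num] at hcl
    rw [hsplit]; linarith
  have lb_G : ∀ y ∈ ball x R2, ∀ s ∈ Ioc (0:ℝ) (t ^ α₁),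
      (t ^ Γ * (κ * t ^ (e * δ)) * (1/2)) * ((β * t ^ (-γ)) * V) ≤
      ∫ z, ∫ u in Ioc t 1, phi d δ γ Γ β t x y s z u := by
    intro y hy s hs
    have hstep1 : (∫ z in ball x r1, ∫ u in Ioc t 1, phi d δ γ Γ β t x y s z u) ≤
        ∫ z, ∫ u in Ioc t 1, phi d δ γ Γ β t x y s z u :=
      setIntegral_le_integral (hInt_z y s hs.1.le)
        (ae_of_all _ fun z => hF_nonneg y z s hs.1.le)
    have hballvol : (volume (ball x r1)).toReal = (β * t ^ (-γ)) * V := by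
      rw [Measure.addHaar_ball volume x hr1.le, finrank_euclideanSpace_fin,
        ENNReal.toReal_mul, ENNReal.toReal_ofReal (by positivity),
        ← Real.rpow_natCast r1 d, hr1d, hV_def]
    have hae : ∀ᵐ z : EuclideanSpace ℝ (Fin d), z ∈ ball x r1 →
        t ^ Γ * (κ * t ^ (e * δ)) * (1/2) ≤
        ∫ u in Ioc t 1, phi d δ γ Γ β t x y s z u := by
      have hx0 : volume ({x} : Set (EuclideanSpace ℝ (Fin d))) = 0 := measure_singleton _
      have hy0 : volume ({y} : Set (EuclideanSpace ℝ (Fin d))) = 0 := measure_singleton _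
      filter_upwards [measure_eq_zero_iff_ae_notMem.mp hx0, measure_eq_zero_iff_ae_notMem.mp hy0]
        with z hzx hzy hzball
      exact lb_F y hy s hs z hzball (by simpa using hzx) (by simpa using hzy)
    have hstep2 : (t ^ Γ * (κ * t ^ (e * δ)) * (1/2)) * ((β * t ^ (-γ)) * V) ≤
        ∫ z in ball x r1, ∫ u in Ioc t 1, phi d δ γ Γ β t x y s z u := by
      have hmono := setIntegral_mono_on_ae
        (integrableOn_const measure_ball_lt_top.ne)
        ((hInt_z y s hs.1.le).integrableOn) measurableSet_ball hae
      rw [setIntegral_const, smul_eq_mul, measureReal_def, hballvol] at hmono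
      calc (t ^ Γ * (κ * t ^ (e * δ)) * (1/2)) * ((β * t ^ (-γ)) * V)
          = (β * t ^ (-γ)) * V * (t ^ Γ * (κ * t ^ (e * δ)) * (1/2)) := by ring
        _ ≤ _ := hmono
    exact hstep2.trans hstep1
  have lb_H : ∀ y ∈ ball x R2,
      ((t ^ Γ * (κ * t ^ (e * δ)) * (1/2)) * ((β * t ^ (-γ)) * V)) * (t ^ α₁) ≤
      ∫ s in Ioc (0:ℝ) (t ^ α₁), ∫ z, ∫ u in Ioc t 1, phi d δ γ Γ β t x y s z u := by
    intro y hy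
    have hcl := setIntegral_ge_of_const_le_real measurableSet_Ioc measure_Ioc_lt_top.ne
      (fun s hs => lb_G y hy s hs) (hInt_s y)
    rwa [measureReal_def, Real.volume_Ioc, sub_zero, ENNReal.toReal_ofReal hT0.le] at hcl
  have hvolB : (volume (ball x R2)).toReal = t ^ (-α₂) * V := by
    rw [Measure.addHaar_ball volume x hR2.le, finrank_euclideanSpace_fin,
      ENNReal.toReal_mul, ENNReal.toReal_ofReal (by positivity),
      ← Real.rpow_natCast R2 d, hR2d, hV_def]
  have hmain := setIntegral_ge_of_const_le_real measurableSet_ball measure_ball_lt_top.ne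
    (fun y hy => lb_H y hy) hInt_y
  rw [measureReal_def, hvolB] at hmain
  refine le_trans (le_of_eq ?_) hmain
  have hts : t ^ Γ * t ^ (e * δ) * t ^ (-γ) * t ^ α₁ * t ^ (-α₂) =
      t ^ (Γ - γ + α₂ * (δ - 1) - α₁ * (γ * δ - 1)) := by
    rw [← Real.rpow_add ht, ← Real.rpow_add ht, ← Real.rpow_add ht, ← Real.rpow_add ht]
    congr 1
    rw [he_def]; ring
  calc (1/2) * (κ * (β * (V * V))) * t ^ (Γ - γ + α₂ * (δ - 1) - α₁ * (γ * δ - 1))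
      = (1/2) * (κ * (β * (V * V))) *
        (t ^ Γ * t ^ (e * δ) * t ^ (-γ) * t ^ α₁ * t ^ (-α₂)) := by rw [hts]
    _ = ((t ^ Γ * (κ * t ^ (e * δ)) * (1/2)) * ((β * t ^ (-γ)) * V)) * (t ^ α₁) *
        (t ^ (-α₂) * V) := by ring
end

section
/- Fix γ ∈ (0, 1/2) and Γ ≥ 0, and define κ_{γ,Γ}(a,b) := b^{−γ} a^{γ−1} if b < a and κ_{γ,Γ}(a,b) := a^{Γ−γ} b^{−(1−γ+Γ)} if b ≥ a, for a, b ∈ (0,1). For ε ∈ (0,1) set A_ε(a) := ∫_ε^1 κ_{γ,Γ}(a,b) db and B_ε(a) := ∫_ε^1 κ_{γ,Γ}(a,b) · ( ∫_ε^1 κ_{γ,Γ}(w,b) dw ) db. Then sup_{ε ∈ (0,1)} ∫_ε^1 A_ε(a) · B_ε(a) da < ∞. -/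
open MeasureTheory

/-- The spatially integrated connection kernel `κ_{γ,Γ}(a,b)` of the directed
age-dependent random connection model: `b^{-γ} a^{γ-1}` if `b < a` (forward) and
`a^{Γ-γ} b^{-(1-γ+Γ)}` if `b ≥ a` (reciprocal). -/
noncomputable def kappa (γ Γ a b : ℝ) : ℝ :=
  if b < a then b ^ (-γ) * a ^ (γ - 1) else a ^ (Γ - γ) * b ^ (-(1 - γ + Γ))

lemma kappa_nonneg (γ Γ a b : ℝ) (ha : 0 ≤ a) (hb : 0 ≤ b) : 0 ≤ kappa γ Γ a b := by
  unfold kappa; split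
  · exact mul_nonneg (Real.rpow_nonneg hb _) (Real.rpow_nonneg ha _)
  · exact mul_nonneg (Real.rpow_nonneg ha _) (Real.rpow_nonneg hb _)

lemma kappa_meas (γ Γ a : ℝ) : Measurable (kappa γ Γ a) := by
  unfold kappa
  exact Measurable.ite (measurableSet_lt measurable_id measurable_const)
    (by measurability) (by measurability)

lemma kappa_le (γ Γ : ℝ) (hγ0 : 0 < γ) (hγ1 : γ < 1) (hΓ : 0 ≤ Γ) {ε a b : ℝ}
    (hε : 0 < ε) (ha : a ∈ Set.Icc ε 1) (hb : b ∈ Set.Icc ε 1) :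
    kappa γ Γ a b ≤ ε ^ (-(1 + Γ)) * ε ^ (-(1 + Γ)) := by
  have bound : ∀ x ∈ Set.Icc ε 1, ∀ e : ℝ, -(1 + Γ) ≤ e → x ^ e ≤ ε ^ (-(1 + Γ)) := by
    intro x hx e he
    calc x ^ e ≤ x ^ (-(1 + Γ)) :=
          Real.rpow_le_rpow_of_exponent_ge (hε.trans_le hx.1) hx.2 he
      _ ≤ ε ^ (-(1 + Γ)) := Real.rpow_le_rpow_of_nonpos hε hx.1 (by linarith)
  have ha0 : (0:ℝ) ≤ a := le_trans hε.le ha.1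
  have hb0 : (0:ℝ) ≤ b := le_trans hε.le hb.1
  unfold kappa; split
  · exact mul_le_mul (bound b hb _ (by linarith)) (bound a ha _ (by linarith))
      (Real.rpow_nonneg ha0 _) (Real.rpow_nonneg hε.le _)
  · exact mul_le_mul (bound a ha _ (by linarith)) (bound b hb _ (by linarith))
      (Real.rpow_nonneg hb0 _) (Real.rpow_nonneg hε.le _)

/-- Key estimate: for `a ∈ (ε,1]`, `∫_ε^1 κ(a,b) b^{-s} db ≤ (1/(1-γ-s)+1/u) a^{-(s+u)}`. -/
lemma key1 (γ Γ ε s u : ℝ) (hγ0 : 0 < γ) (hΓ : 0 ≤ Γ) (hε : 0 < ε)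
    (hs : 0 ≤ s) (hsu : γ + s < 1) (hu : 0 < u) (huΓ : γ - Γ - s ≤ u)
    {a : ℝ} (ha : a ∈ Set.Ioc ε 1) :
    ∫ b in ε..1, kappa γ Γ a b * b ^ (-s) ≤ (1 / (1 - γ - s) + 1 / u) * a ^ (-(s + u)) := by
  obtain ⟨ha1, ha2⟩ := ha
  have ha0 : 0 < a := hε.trans ha1
  have e1 : ∀ b ∈ Set.uIcc ε a, kappa γ Γ a b * b ^ (-s) = a ^ (γ - 1) * b ^ (-(γ + s)) := by
    rw [Set.uIcc_of_le ha1.le]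
    rintro b ⟨hb1, hb2⟩
    have hb0 : 0 < b := hε.trans_le hb1
    unfold kappa
    rcases lt_or_eq_of_le hb2 with h | h
    · rw [if_pos h, show -(γ + s) = -γ + -s by ring, Real.rpow_add hb0]; ring
    · subst h
      rw [if_neg (lt_irrefl b), ← Real.rpow_add hb0, ← Real.rpow_add hb0, ← Real.rpow_add hb0]
      congr 1; ring
  have e2 : ∀ b ∈ Set.uIcc a 1, kappa γ Γ a b * b ^ (-s)
      = a ^ (Γ - γ) * b ^ (-(1 - γ + Γ) + -s) := by
    rw [Set.uIcc_of_le ha2]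
    rintro b ⟨hb1, hb2⟩
    have hb0 : 0 < b := ha0.trans_le hb1
    unfold kappa
    rw [if_neg (not_lt.2 hb1), mul_assoc, ← Real.rpow_add hb0]
  have i1r : IntervalIntegrable (fun b : ℝ => a ^ (γ - 1) * b ^ (-(γ + s))) volume ε a :=
    (intervalIntegral.intervalIntegrable_rpow' (by linarith)).const_mul _
  have h0uIcc : (0:ℝ) ∉ Set.uIcc a 1 := by
    rw [Set.uIcc_of_le ha2]
    rintro ⟨h0, -⟩; linarith
  have i2r : IntervalIntegrable (fun b : ℝ => a ^ (Γ - γ) * b ^ (-(1 - γ + Γ) + -s)) volume a 1 :=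
    (intervalIntegral.intervalIntegrable_rpow (Or.inr h0uIcc)).const_mul _
  have i1 : IntervalIntegrable (fun b => kappa γ Γ a b * b ^ (-s)) volume ε a := by
    refine i1r.congr ?_
    intro b hb
    exact (e1 b (Set.uIoc_subset_uIcc hb)).symm
  have i2 : IntervalIntegrable (fun b => kappa γ Γ a b * b ^ (-s)) volume a 1 := by
    refine i2r.congr ?_
    intro b hb
    exact (e2 b (Set.uIoc_subset_uIcc hb)).symm
  have hsplit : ∫ b in ε..1, kappa γ Γ a b * b ^ (-s)
      = (∫ b in ε..a, kappa γ Γ a b * b ^ (-s)) + ∫ b in a..1, kappa γ Γ a b * b ^ (-s) :=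
    (intervalIntegral.integral_add_adjacent_intervals i1 i2).symm
  rw [hsplit]
  have hd : (0:ℝ) < -(γ + s) + 1 := by linarith
  have hb1 : (∫ b in ε..a, kappa γ Γ a b * b ^ (-s)) ≤ (1 / (1 - γ - s)) * a ^ (-(s + u)) := by
    rw [intervalIntegral.integral_congr e1, intervalIntegral.integral_const_mul,
      integral_rpow (Or.inl (by linarith))]
    calc a ^ (γ - 1) * ((a ^ (-(γ + s) + 1) - ε ^ (-(γ + s) + 1)) / (-(γ + s) + 1))
        ≤ a ^ (γ - 1) * (a ^ (-(γ + s) + 1) / (-(γ + s) + 1)) := by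
          refine mul_le_mul_of_nonneg_left ((div_le_div_iff_of_pos_right hd).mpr ?_)
            (Real.rpow_nonneg ha0.le _)
          have := Real.rpow_nonneg hε.le (-(γ + s) + 1)
          linarith
      _ = a ^ (-s) / (-(γ + s) + 1) := by
          rw [mul_div_assoc', ← Real.rpow_add ha0]
          congr 2; ring
      _ ≤ a ^ (-(s + u)) / (-(γ + s) + 1) := by
          refine (div_le_div_iff_of_pos_right hd).mpr ?_
          exact Real.rpow_le_rpow_of_exponent_ge ha0 ha2 (by linarith)
      _ = (1 / (1 - γ - s)) * a ^ (-(s + u)) := by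
          rw [one_div, inv_mul_eq_div]; congr 1; ring
  have hb2 : (∫ b in a..1, kappa γ Γ a b * b ^ (-s)) ≤ (1 / u) * a ^ (-(s + u)) := by
    rw [intervalIntegral.integral_congr e2]
    have hmono : ∀ b ∈ Set.Icc a 1,
        a ^ (Γ - γ) * b ^ (-(1 - γ + Γ) + -s)
          ≤ (a ^ (Γ - γ) * a ^ (-(1 - γ + Γ) + -s - (u - 1))) * b ^ (u - 1) := by
      rintro b ⟨hba, hb1'⟩
      have hb0 : 0 < b := ha0.trans_le hba
      have hsplitpow : b ^ (-(1 - γ + Γ) + -s)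
          = b ^ (-(1 - γ + Γ) + -s - (u - 1)) * b ^ (u - 1) := by
        rw [← Real.rpow_add hb0]; congr 1; ring
      rw [hsplitpow, ← mul_assoc]
      refine mul_le_mul_of_nonneg_right ?_ (Real.rpow_nonneg hb0.le _)
      refine mul_le_mul_of_nonneg_left ?_ (Real.rpow_nonneg ha0.le _)
      exact Real.rpow_le_rpow_of_nonpos ha0 hba (by linarith)
    have iL : IntervalIntegrable (fun b : ℝ => a ^ (Γ - γ) * b ^ (-(1 - γ + Γ) + -s)) volume a 1 :=
      i2r
    have iR : IntervalIntegrable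
        (fun b : ℝ => (a ^ (Γ - γ) * a ^ (-(1 - γ + Γ) + -s - (u - 1))) * b ^ (u - 1))
        volume a 1 :=
      (intervalIntegral.intervalIntegrable_rpow (Or.inr h0uIcc)).const_mul _
    calc (∫ b in a..1, a ^ (Γ - γ) * b ^ (-(1 - γ + Γ) + -s))
        ≤ ∫ b in a..1, (a ^ (Γ - γ) * a ^ (-(1 - γ + Γ) + -s - (u - 1))) * b ^ (u - 1) := by
          refine intervalIntegral.integral_mono_on ha2 iL iR hmono
      _ = (a ^ (Γ - γ) * a ^ (-(1 - γ + Γ) + -s - (u - 1)))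
            * (((1:ℝ) ^ (u - 1 + 1) - a ^ (u - 1 + 1)) / (u - 1 + 1)) := by
          rw [intervalIntegral.integral_const_mul, integral_rpow (Or.inl (by linarith))]
      _ ≤ (1 / u) * a ^ (-(s + u)) := by
          rw [← Real.rpow_add ha0, show Γ - γ + (-(1 - γ + Γ) + -s - (u - 1)) = -(s + u) by ring,
            show u - 1 + 1 = u by ring, Real.one_rpow, mul_comm]
          refine mul_le_mul_of_nonneg_right ((div_le_div_iff_of_pos_right hu).mpr ?_)
            (Real.rpow_nonneg ha0.le _)
          have := Real.rpow_nonneg ha0.le u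
          linarith
  linarith

/-- Key estimate for the inner integral over the first argument:
for `b ∈ (ε,1]`, `∫_ε^1 κ(w,b) dw ≤ (1/(1+Γ-γ)+1/γ) b^{-γ}`. -/
lemma key2 (γ Γ ε : ℝ) (hγ0 : 0 < γ) (hγ1 : γ < 1) (hΓ : 0 ≤ Γ) (hε : 0 < ε)
    {b : ℝ} (hb : b ∈ Set.Ioc ε 1) :
    ∫ w in ε..1, kappa γ Γ w b ≤ (1 / (1 + Γ - γ) + 1 / γ) * b ^ (-γ) := by
  obtain ⟨hb1, hb2⟩ := hb
  have hb0 : 0 < b := hε.trans hb1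
  have honele : (1:ℝ) ≤ b ^ (-γ) := by
    have := Real.rpow_le_rpow_of_exponent_ge hb0 hb2 (show -γ ≤ 0 by linarith)
    rwa [Real.rpow_zero] at this
  have e1 : ∀ w ∈ Set.uIcc ε b, kappa γ Γ w b = b ^ (-(1 - γ + Γ)) * w ^ (Γ - γ) := by
    rw [Set.uIcc_of_le hb1.le]
    rintro w ⟨hw1, hw2⟩
    unfold kappa
    rw [if_neg (not_lt.2 hw2), mul_comm]
  have e2 : ∀ w ∈ Set.uIcc b 1, kappa γ Γ w b = b ^ (-γ) * w ^ (γ - 1) := by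
    rw [Set.uIcc_of_le hb2]
    rintro w ⟨hw1, hw2⟩
    have hw0 : 0 < w := hb0.trans_le hw1
    unfold kappa
    rcases lt_or_eq_of_le hw1 with h | h
    · rw [if_pos h]
    · rw [← h, if_neg (lt_irrefl b), ← Real.rpow_add hb0, ← Real.rpow_add hb0]
      congr 1; ring
  have h0uIcc : (0:ℝ) ∉ Set.uIcc b 1 := by
    rw [Set.uIcc_of_le hb2]
    rintro ⟨h0, -⟩; linarith
  have i1r : IntervalIntegrable (fun w : ℝ => b ^ (-(1 - γ + Γ)) * w ^ (Γ - γ)) volume ε b :=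
    (intervalIntegral.intervalIntegrable_rpow' (by linarith)).const_mul _
  have i2r : IntervalIntegrable (fun w : ℝ => b ^ (-γ) * w ^ (γ - 1)) volume b 1 :=
    (intervalIntegral.intervalIntegrable_rpow' (by linarith)).const_mul _
  have i1 : IntervalIntegrable (fun w => kappa γ Γ w b) volume ε b := by
    refine i1r.congr ?_
    intro w hw
    exact (e1 w (Set.uIoc_subset_uIcc hw)).symm
  have i2 : IntervalIntegrable (fun w => kappa γ Γ w b) volume b 1 := by
    refine i2r.congr ?_
    intro w hw
    exact (e2 w (Set.uIoc_subset_uIcc hw)).symm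
  have hsplit : ∫ w in ε..1, kappa γ Γ w b
      = (∫ w in ε..b, kappa γ Γ w b) + ∫ w in b..1, kappa γ Γ w b :=
    (intervalIntegral.integral_add_adjacent_intervals i1 i2).symm
  rw [hsplit]
  have hd1 : (0:ℝ) < Γ - γ + 1 := by linarith
  have hp1 : (∫ w in ε..b, kappa γ Γ w b) ≤ (1 / (1 + Γ - γ)) * b ^ (-γ) := by
    rw [intervalIntegral.integral_congr e1, intervalIntegral.integral_const_mul,
      integral_rpow (Or.inl (by linarith))]
    calc b ^ (-(1 - γ + Γ)) * ((b ^ (Γ - γ + 1) - ε ^ (Γ - γ + 1)) / (Γ - γ + 1))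
        ≤ b ^ (-(1 - γ + Γ)) * (b ^ (Γ - γ + 1) / (Γ - γ + 1)) := by
          refine mul_le_mul_of_nonneg_left ((div_le_div_iff_of_pos_right hd1).mpr ?_)
            (Real.rpow_nonneg hb0.le _)
          have := Real.rpow_nonneg hε.le (Γ - γ + 1)
          linarith
      _ = b ^ (0:ℝ) / (Γ - γ + 1) := by
          rw [mul_div_assoc', ← Real.rpow_add hb0]
          congr 2; ring
      _ ≤ (1 / (1 + Γ - γ)) * b ^ (-γ) := by
          rw [Real.rpow_zero, div_eq_mul_one_div, one_mul,
            show Γ - γ + 1 = 1 + Γ - γ by ring]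
          exact le_mul_of_one_le_right (div_pos one_pos (by linarith : (0:ℝ) < 1 + Γ - γ)).le honele
  have hp2 : (∫ w in b..1, kappa γ Γ w b) ≤ (1 / γ) * b ^ (-γ) := by
    rw [intervalIntegral.integral_congr e2, intervalIntegral.integral_const_mul,
      integral_rpow (Or.inl (by linarith))]
    rw [show γ - 1 + 1 = γ by ring, Real.one_rpow]
    rw [mul_comm (1/γ) (b ^ (-γ))]
    refine mul_le_mul_of_nonneg_left ((div_le_div_iff_of_pos_right hγ0).mpr ?_) (Real.rpow_nonneg hb0.le _)
    have := Real.rpow_nonneg hb0.le γ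
    linarith
  linarith

/-- Uniform boundedness of the truncated expected open-bow-tie count for `γ < 1/2`:
with `A_ε(a) = ∫_ε^1 κ(a,b) db` and
`B_ε(a) = ∫_ε^1 κ(a,b) (∫_ε^1 κ(w,b) dw) db`, the quantity
`∫_ε^1 A_ε(a) B_ε(a) da` is bounded uniformly in `ε ∈ (0,1)`. -/
theorem stmt16 (γ Γ : ℝ) (hγ0 : 0 < γ) (hγ1 : γ < 1 / 2) (hΓ : 0 ≤ Γ) :
    ∃ M : ℝ, ∀ ε : ℝ, 0 < ε → ε < 1 →
      (∫ a in ε..1,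
          (∫ b in ε..1, kappa γ Γ a b) *
          (∫ b in ε..1, kappa γ Γ a b * ∫ w in ε..1, kappa γ Γ w b))
        ≤ M := by
  have hγ1' : γ < 1 := by linarith
  set δ : ℝ := 1 / 2 - γ with hδdef
  have hδ : 0 < δ := by rw [hδdef]; linarith
  set K0 : ℝ := 1 / (1 - γ - 0) + 1 / γ with hK0def
  set K1 : ℝ := 1 / (1 - γ - γ) + 1 / δ with hK1def
  set K2 : ℝ := 1 / (1 + Γ - γ) + 1 / γ with hK2def
  have hK0 : 0 < K0 := by
    rw [hK0def]
    exact add_pos (div_pos one_pos (by linarith)) (div_pos one_pos hγ0)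
  have hK1 : 0 < K1 := by
    rw [hK1def]
    exact add_pos (div_pos one_pos (by linarith)) (div_pos one_pos hδ)
  have hK2 : 0 < K2 := by
    rw [hK2def]
    exact add_pos (div_pos one_pos (by linarith)) (div_pos one_pos hγ0)
  refine ⟨(K0 * (K2 * K1)) * (1 / δ), ?_⟩
  intro ε hε0 hε1
  have hε1' : ε ≤ 1 := hε1.le
  -- notation
  set A : ℝ → ℝ := fun a => ∫ b in ε..1, kappa γ Γ a b with hAdef
  set B : ℝ → ℝ := fun a => ∫ b in ε..1, kappa γ Γ a b * ∫ w in ε..1, kappa γ Γ w b with hBdef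
  have hAnn : ∀ a ∈ Set.Ioc ε 1, 0 ≤ A a := by
    intro a ha
    exact intervalIntegral.integral_nonneg hε1' fun b hb =>
      kappa_nonneg γ Γ a b (hε0.trans ha.1).le (hε0.le.trans hb.1)
  have hBnn : ∀ a ∈ Set.Ioc ε 1, 0 ≤ B a := by
    intro a ha
    refine intervalIntegral.integral_nonneg hε1' fun b hb => mul_nonneg
      (kappa_nonneg γ Γ a b (hε0.trans ha.1).le (hε0.le.trans hb.1)) ?_
    exact intervalIntegral.integral_nonneg hε1' fun w hw =>
      kappa_nonneg γ Γ w b (hε0.le.trans hw.1) (hε0.le.trans hb.1)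
  -- bound on A
  have hA : ∀ a ∈ Set.Ioc ε 1, A a ≤ K0 * a ^ (-(0 + γ)) := by
    intro a ha
    have h := key1 γ Γ ε 0 γ hγ0 hΓ hε0 le_rfl (by linarith) hγ0 (by linarith) ha
    simp only [neg_zero, Real.rpow_zero, mul_one] at h
    exact h
  -- bound on B
  have hB : ∀ a ∈ Set.Ioc ε 1, B a ≤ K2 * (K1 * a ^ (-(γ + δ))) := by
    intro a ha
    have ha0 : 0 < a := hε0.trans ha.1
    have step1 : B a ≤ ∫ b in ε..1, kappa γ Γ a b * (K2 * b ^ (-γ)) := by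
      rw [hBdef]
      simp only
      rw [intervalIntegral.integral_of_le hε1', intervalIntegral.integral_of_le hε1']
      refine integral_mono_of_nonneg ?_ ?_ ?_
      · filter_upwards [ae_restrict_mem measurableSet_Ioc] with b hb
        refine mul_nonneg (kappa_nonneg γ Γ a b ha0.le (hε0.trans hb.1).le) ?_
        exact intervalIntegral.integral_nonneg hε1' fun w hw =>
          kappa_nonneg γ Γ w b (hε0.le.trans hw.1) (hε0.trans hb.1).le
      · -- integrability of the dominating function
        have hmeas : AEStronglyMeasurable (fun b => kappa γ Γ a b * (K2 * b ^ (-γ)))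
            (volume.restrict (Set.Ioc ε 1)) := by
          refine Measurable.aestronglyMeasurable ?_
          exact (kappa_meas γ Γ a).mul (by measurability)
        refine Integrable.mono' (g := fun _ => (ε ^ (-(1+Γ)) * ε ^ (-(1+Γ))) * (K2 * ε ^ (-γ)))
          (integrable_const _) hmeas ?_
        filter_upwards [ae_restrict_mem measurableSet_Ioc] with b hb
        have hbIcc : b ∈ Set.Icc ε 1 := ⟨hb.1.le, hb.2⟩
        have haIcc : a ∈ Set.Icc ε 1 := ⟨ha.1.le, ha.2⟩
        have h1 := kappa_le γ Γ hγ0 hγ1' hΓ hε0 haIcc hbIcc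
        have h2 : b ^ (-γ) ≤ ε ^ (-γ) :=
          Real.rpow_le_rpow_of_nonpos hε0 hb.1.le (by linarith)
        have hk0 := kappa_nonneg γ Γ a b ha0.le (hε0.trans hb.1).le
        have hx0 : (0:ℝ) ≤ b ^ (-γ) := Real.rpow_nonneg (hε0.trans hb.1).le _
        rw [Real.norm_eq_abs, abs_of_nonneg (mul_nonneg hk0 (by positivity))]
        exact mul_le_mul h1 (mul_le_mul_of_nonneg_left h2 hK2.le) (by positivity)
          (by positivity)
      · filter_upwards [ae_restrict_mem measurableSet_Ioc] with b hb
        refine mul_le_mul_of_nonneg_left ?_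
          (kappa_nonneg γ Γ a b ha0.le (hε0.trans hb.1).le)
        exact key2 γ Γ ε hγ0 hγ1' hΓ hε0 hb
    have step2 : (∫ b in ε..1, kappa γ Γ a b * (K2 * b ^ (-γ)))
        = K2 * ∫ b in ε..1, kappa γ Γ a b * b ^ (-γ) := by
      rw [← intervalIntegral.integral_const_mul]
      congr 1; funext b; ring
    have step3 : (∫ b in ε..1, kappa γ Γ a b * b ^ (-γ)) ≤ K1 * a ^ (-(γ + δ)) := by
      exact key1 γ Γ ε γ δ hγ0 hΓ hε0 hγ0.le (by linarith) hδ (by linarith) ha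
    calc B a ≤ ∫ b in ε..1, kappa γ Γ a b * (K2 * b ^ (-γ)) := step1
      _ = K2 * ∫ b in ε..1, kappa γ Γ a b * b ^ (-γ) := step2
      _ ≤ K2 * (K1 * a ^ (-(γ + δ))) := mul_le_mul_of_nonneg_left step3 hK2.le
  -- combine
  rw [intervalIntegral.integral_of_le hε1']
  have hfinal : ∫ a in Set.Ioc ε 1, (K0 * (K2 * K1)) * a ^ (-(γ + (γ + δ)))
      ≤ (K0 * (K2 * K1)) * (1 / δ) := by
    rw [← intervalIntegral.integral_of_le hε1', intervalIntegral.integral_const_mul,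
      integral_rpow (Or.inl (by rw [hδdef]; push_cast; linarith))]
    refine mul_le_mul_of_nonneg_left ?_ (by positivity)
    rw [show -(γ + (γ + δ)) + 1 = δ by rw [hδdef]; ring, Real.one_rpow]
    have h1 : (0:ℝ) ≤ ε ^ δ := Real.rpow_nonneg hε0.le _
    rw [one_div, div_eq_mul_inv]
    have : 1 - ε ^ δ ≤ 1 := by linarith
    calc (1 - ε ^ δ) * δ⁻¹ ≤ 1 * δ⁻¹ :=
          mul_le_mul_of_nonneg_right this (by positivity)
      _ = δ⁻¹ := one_mul _
  refine le_trans (integral_mono_of_nonneg ?_ ?_ ?_) hfinal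
  · filter_upwards [ae_restrict_mem measurableSet_Ioc] with a ha
    exact mul_nonneg (hAnn a ha) (hBnn a ha)
  · have : IntervalIntegrable (fun a : ℝ => (K0 * (K2 * K1)) * a ^ (-(γ + (γ + δ))))
        volume ε 1 :=
      (intervalIntegral.intervalIntegrable_rpow' (by rw [hδdef]; linarith)).const_mul _
    have h := this.1
    rwa [show Set.Ioc ε 1 = Set.Ioc ε 1 from rfl] at h
  · filter_upwards [ae_restrict_mem measurableSet_Ioc] with a ha
    have ha0 : 0 < a := hε0.trans ha.1
    calc A a * B a ≤ (K0 * a ^ (-(0 + γ))) * (K2 * (K1 * a ^ (-(γ + δ)))) :=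
          mul_le_mul (hA a ha) (hB a ha) (hBnn a ha) (by positivity)
      _ = (K0 * (K2 * K1)) * a ^ (-(γ + (γ + δ))) := by
          rw [show -(γ + (γ + δ)) = -(0 + γ) + -(γ + δ) by ring, Real.rpow_add ha0]
          ring
end
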